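/- arXiv:1006.2675 — 7 statements merged into one kernel-verified Lean document; each statement's English description precedes it below -/
import Mathlib

section
/- Let X be a Polish space and H a hereditary, dense G_δ subset of the hyperspace K(X) of compact subsets of X with the Vietoris topology. Then there exists a sequence (U_n) of open, dense, and hereditary subsets of K(X) such that H = ⋂_n U_n. -/
open TopologicalSpace Metric Set

/-- A subset of the hyperspace of nonempty compact sets is hereditary if it is closed
under taking (nonempty) compact subsets. -/
def Hereditary {X : Type*} [MetricSpace X] (H : Set (NonemptyCompacts X)) : Prop :=
  ∀ K ∈ H, ∀ C : NonemptyCompacts X, (C : Set X) ⊆ (K : Set X) → C ∈ H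

/-- The set of nonempty compact subsets of a fixed compact set is compact in the
hyperspace. -/
lemma isCompact_subsets {X : Type*} [MetricSpace X] (K : NonemptyCompacts X) :
    IsCompact {C : NonemptyCompacts X | (C : Set X) ⊆ (K : Set X)} := by
  haveI : CompactSpace (K : Set X) := isCompact_iff_compactSpace.mp K.isCompact
  let f : NonemptyCompacts (K : Set X) → NonemptyCompacts X := fun C =>
    ⟨⟨Subtype.val '' (C : Set (K : Set X)), C.isCompact.image continuous_subtype_val⟩,
      C.nonempty.image _⟩
  have hf : Isometry f := by
    intro C D
    show EMetric.hausdorffEdist (Subtype.val '' (C : Set (K : Set X)))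
        (Subtype.val '' (D : Set (K : Set X))) = EMetric.hausdorffEdist
        (C : Set (K : Set X)) (D : Set (K : Set X))
    exact EMetric.hausdorffEdist_image isometry_subtype_coe
  have hrange : {C : NonemptyCompacts X | (C : Set X) ⊆ (K : Set X)} = Set.range f := by
    ext C
    constructor
    · intro hC
      have hcl : IsClosed (Subtype.val ⁻¹' (C : Set X) : Set (K : Set X)) :=
        C.isCompact.isClosed.preimage continuous_subtype_val
      refine ⟨⟨⟨Subtype.val ⁻¹' (C : Set X), hcl.isCompact⟩, ?_⟩, ?_⟩
      · obtain ⟨x, hx⟩ := C.nonempty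
        exact ⟨⟨x, hC hx⟩, hx⟩
      · apply NonemptyCompacts.ext
        show Subtype.val '' (Subtype.val ⁻¹' (C : Set X)) = (C : Set X)
        rw [Subtype.image_preimage_coe, Set.inter_eq_right.mpr hC]
    · rintro ⟨D, rfl⟩
      exact (Set.image_subset_range _ _).trans (by simp [Subtype.range_coe])
  rw [hrange]
  exact isCompact_range hf.continuous

/-- The hereditary kernel of an open set is open. -/
lemma isOpen_kernel {X : Type*} [MetricSpace X] {V : Set (NonemptyCompacts X)}
    (hV : IsOpen V) :
    IsOpen {K : NonemptyCompacts X |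
      ∀ C : NonemptyCompacts X, (C : Set X) ⊆ (K : Set X) → C ∈ V} := by
  rw [Metric.isOpen_iff]
  intro K hK
  have hS : {C : NonemptyCompacts X | (C : Set X) ⊆ (K : Set X)} ⊆ V := fun C hC => hK C hC
  obtain ⟨ε, εpos, hε⟩ := (isCompact_subsets K).exists_thickening_subset_open hV hS
  refine ⟨ε / 2, by positivity, ?_⟩
  intro L hL
  intro C hCL
  -- approximate C by a subset C' of K
  have hfin : EMetric.hausdorffEdist (L : Set X) (K : Set X) ≠ ⊤ :=
    hausdorffEdist_ne_top_of_nonempty_of_bounded L.nonempty K.nonempty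
      L.isCompact.isBounded K.isCompact.isBounded
  have hdistLK : hausdorffDist (L : Set X) (K : Set X) < ε / 2 := by
    rw [Metric.mem_ball, NonemptyCompacts.dist_eq] at hL
    exact hL
  set C'set : Set X := (K : Set X) ∩ Metric.cthickening (ε / 2) (C : Set X) with hC'def
  have hC'compact : IsCompact C'set :=
    K.isCompact.inter_right (Metric.isClosed_cthickening)
  have key : ∀ x ∈ (C : Set X), ∃ y ∈ C'set, dist x y < ε / 2 := by
    intro x hx
    obtain ⟨y, hyK, hxy⟩ :=
      exists_dist_lt_of_hausdorffDist_lt (hCL hx) hdistLK hfin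
    refine ⟨y, ⟨hyK, ?_⟩, hxy⟩
    apply Metric.mem_cthickening_of_dist_le y x _ _ hx (by rw [dist_comm]; exact hxy.le)
  obtain ⟨x0, hx0⟩ := C.nonempty
  obtain ⟨y0, hy0, _⟩ := key x0 hx0
  have hC'ne : C'set.Nonempty := ⟨y0, hy0⟩
  set C' : NonemptyCompacts X := ⟨⟨C'set, hC'compact⟩, hC'ne⟩ with hC'
  have hC'S : C' ∈ {C : NonemptyCompacts X | (C : Set X) ⊆ (K : Set X)} :=
    Set.inter_subset_left
  have hdist : dist C C' < ε := by
    rw [NonemptyCompacts.dist_eq]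
    have h1 : ∀ x ∈ (C : Set X), infDist x C'set ≤ ε / 2 := by
      intro x hx
      obtain ⟨y, hy, hxy⟩ := key x hx
      exact (infDist_le_dist_of_mem hy).trans hxy.le
    have h2 : ∀ y ∈ C'set, infDist y (C : Set X) ≤ ε / 2 := by
      intro y hy
      have h := Metric.mem_cthickening_iff.mp hy.2
      calc infDist y (C : Set X) = (EMetric.infEdist y (C : Set X)).toReal := rfl
        _ ≤ (ENNReal.ofReal (ε / 2)).toReal := ENNReal.toReal_mono (by simp) h
        _ = ε / 2 := ENNReal.toReal_ofReal (by positivity)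
    calc hausdorffDist (C : Set X) (C' : Set X) ≤ ε / 2 :=
          hausdorffDist_le_of_infDist (by positivity) h1 h2
      _ < ε := by linarith
  exact hε (Metric.mem_thickening_iff.mpr ⟨C', hC'S, hdist⟩)

theorem normal_form_exists {X : Type*} [MetricSpace X] [PolishSpace X]
    (H : Set (NonemptyCompacts X)) (hher : Hereditary H) (hdense : Dense H)
    (hGδ : IsGδ H) :
    ∃ U : ℕ → Set (NonemptyCompacts X),
      (∀ n, IsOpen (U n)) ∧ (∀ n, Dense (U n)) ∧ (∀ n, Hereditary (U n)) ∧
        H = ⋂ n, U n := by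
  obtain ⟨V, hVopen, hHV⟩ := hGδ.eq_iInter_nat
  refine ⟨fun n => {K : NonemptyCompacts X |
      ∀ C : NonemptyCompacts X, (C : Set X) ⊆ (K : Set X) → C ∈ V n}, ?_, ?_, ?_, ?_⟩
  · exact fun n => isOpen_kernel (hVopen n)
  · intro n
    apply hdense.mono
    intro K hK C hCK
    have : C ∈ H := hher K hK C hCK
    rw [hHV] at this
    exact Set.mem_iInter.mp this n
  · intro n K hK C hCK D hDC
    exact hK D (hDC.trans hCK)
  · apply Set.Subset.antisymm
    · intro K hK
      refine Set.mem_iInter.mpr fun n C hCK => ?_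
      have : C ∈ H := hher K hK C hCK
      rw [hHV] at this
      exact Set.mem_iInter.mp this n
    · intro K hK
      rw [hHV]
      refine Set.mem_iInter.mpr fun n => ?_
      exact Set.mem_iInter.mp hK n K subset_rfl
end

section
/- Let X be a Polish space with compatible complete metric d, and let H ⊆ K(X) be a dense G_δ set written as H = ⋂_n V_n with each V_n open and dense. For each n, the set C_n = {K ∈ K(X) : there exists a compact C ⊆ K with C ∉ V_n} is closed in K(X) and disjoint from H, provided H is hereditary. -/
open TopologicalSpace

lemma subsets_isCompact {X : Type*} [MetricSpace X] (K : TopologicalSpace.NonemptyCompacts X) :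
    IsCompact {C : TopologicalSpace.NonemptyCompacts X | (C : Set X) ⊆ (K : Set X)} := by
  haveI : CompactSpace ↥(K : Set X) := isCompact_iff_compactSpace.mp K.isCompact
  let f : TopologicalSpace.NonemptyCompacts ↥(K : Set X) → TopologicalSpace.NonemptyCompacts X :=
    fun C => ⟨⟨Subtype.val '' (C : Set ↥(K : Set X)),
      C.isCompact.image continuous_subtype_val⟩, C.nonempty.image _⟩
  have hf : Isometry f := fun C D => by
    show EMetric.hausdorffEdist _ _ = EMetric.hausdorffEdist _ _
    exact EMetric.hausdorffEdist_image isometry_subtype_coe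
  have hrange : Set.range f = {C : TopologicalSpace.NonemptyCompacts X | (C : Set X) ⊆ (K : Set X)} := by
    apply Set.Subset.antisymm
    · rintro _ ⟨D, rfl⟩ x hx
      rcases hx with ⟨y, _, rfl⟩
      exact y.2
    · rintro C (hC : (C : Set X) ⊆ (K : Set X))
      have hcl : IsClosed (Subtype.val ⁻¹' (C : Set X) : Set ↥(K : Set X)) :=
        C.isCompact.isClosed.preimage continuous_subtype_val
      obtain ⟨x, hx⟩ := C.nonempty
      refine ⟨⟨⟨Subtype.val ⁻¹' (C : Set X), hcl.isCompact⟩, ⟨⟨x, hC hx⟩, hx⟩⟩, ?_⟩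
      apply TopologicalSpace.NonemptyCompacts.ext
      show Subtype.val '' (Subtype.val ⁻¹' (C : Set X)) = (C : Set X)
      rw [Subtype.image_preimage_coe]
      exact Set.inter_eq_self_of_subset_right hC
  rw [← hrange]
  exact isCompact_range hf.continuous

theorem bad_sets_closed_and_disjoint {X : Type*} [MetricSpace X] [PolishSpace X]
    (V : ℕ → Set (NonemptyCompacts X)) (hopen : ∀ n, IsOpen (V n))
    (hdense : ∀ n, Dense (V n)) (H : Set (NonemptyCompacts X))
    (hH : H = ⋂ n, V n) (hher : Hereditary H) (n : ℕ) :
    IsClosed {K : NonemptyCompacts X |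
        ∃ C : NonemptyCompacts X, (C : Set X) ⊆ (K : Set X) ∧ C ∉ V n} ∧
      Disjoint {K : NonemptyCompacts X |
        ∃ C : NonemptyCompacts X, (C : Set X) ⊆ (K : Set X) ∧ C ∉ V n} H := by
  constructor
  · rw [← isOpen_compl_iff]
    rw [Metric.isOpen_iff]
    intro K hK
    have hKgood : ∀ C : NonemptyCompacts X, (C : Set X) ⊆ (K : Set X) → C ∈ V n := by
      intro C hC
      by_contra h
      exact hK ⟨C, hC, h⟩
    have hSsub : {C : NonemptyCompacts X | (C : Set X) ⊆ (K : Set X)} ⊆ V n := hKgood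
    obtain ⟨δ, hδpos, hthick⟩ :=
      (subsets_isCompact K).exists_thickening_subset_open (hopen n) hSsub
    refine ⟨δ, hδpos, ?_⟩
    intro K' hK'
    rw [Metric.mem_ball] at hK'
    intro hbad
    obtain ⟨C', hC'sub, hC'not⟩ := hbad
    -- project C' onto K
    set r : ℝ := dist K' K with hr
    have hr0 : 0 ≤ r := dist_nonneg
    have hfin : EMetric.hausdorffEdist (K' : Set X) (K : Set X) ≠ ⊤ :=
      Metric.hausdorffEdist_ne_top_of_nonempty_of_bounded K'.nonempty K.nonempty
        K'.isCompact.isBounded K.isCompact.isBounded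
    have hdistHK : Metric.hausdorffDist (K' : Set X) (K : Set X) = r :=
      (Metric.NonemptyCompacts.dist_eq).symm
    -- for every y in K', there is x in K within r with x close to C' if y ∈ C'
    set P : Set X := {x ∈ (K : Set X) | Metric.infDist x (C' : Set X) ≤ r} with hP
    have hPsubK : P ⊆ (K : Set X) := fun x hx => hx.1
    have hPclosed : IsClosed P :=
      K.isCompact.isClosed.inter (isClosed_le (Metric.continuous_infDist_pt _) continuous_const)
    have hPcompact : IsCompact P := K.isCompact.of_isClosed_subset hPclosed hPsubK
    have hproj : ∀ y ∈ (C' : Set X), ∃ x ∈ P, dist y x ≤ r := by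
      intro y hy
      have hyK' : y ∈ (K' : Set X) := hC'sub hy
      obtain ⟨x, hxK, hxd⟩ := K.isCompact.exists_infDist_eq_dist K.nonempty y
      have h1 : dist y x ≤ r := by
        rw [← hxd, ← hdistHK]
        exact Metric.infDist_le_hausdorffDist_of_mem hyK' hfin
      refine ⟨x, ⟨hxK, ?_⟩, h1⟩
      calc Metric.infDist x (C' : Set X) ≤ dist x y := Metric.infDist_le_dist_of_mem hy
        _ ≤ r := by rwa [dist_comm]
    have hPne : P.Nonempty := by
      obtain ⟨y, hy⟩ := C'.nonempty
      obtain ⟨x, hx, -⟩ := hproj y hy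
      exact ⟨x, hx⟩
    set D : NonemptyCompacts X := ⟨⟨P, hPcompact⟩, hPne⟩ with hD
    have hDdist : dist C' D ≤ r := by
      rw [Metric.NonemptyCompacts.dist_eq]
      apply Metric.hausdorffDist_le_of_mem_dist hr0
      · intro y hy
        obtain ⟨x, hx, hd⟩ := hproj y hy
        exact ⟨x, hx, hd⟩
      · intro x hx
        obtain ⟨y, hy, hd⟩ := C'.isCompact.exists_infDist_eq_dist C'.nonempty x
        exact ⟨y, hy, by rw [← hd]; exact hx.2⟩
    have hDmem : D ∈ {C : NonemptyCompacts X | (C : Set X) ⊆ (K : Set X)} := hPsubK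
    have : C' ∈ Metric.thickening δ
        {C : NonemptyCompacts X | (C : Set X) ⊆ (K : Set X)} := by
      rw [Metric.mem_thickening_iff_exists_edist_lt]
      refine ⟨D, hDmem, ?_⟩
      rw [edist_dist]
      exact lt_of_le_of_lt (ENNReal.ofReal_le_ofReal hDdist)
        (ENNReal.ofReal_lt_ofReal_iff hδpos |>.mpr hK')
    exact hC'not (hthick this)
  · rw [Set.disjoint_left]
    rintro K ⟨C, hCsub, hCnot⟩ hKH
    have : C ∈ H := hher K hKH C hCsub
    rw [hH] at this
    exact hCnot (Set.mem_iInter.mp this n)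
end

section
/- Let X be a Polish space and U ⊆ K(X) an open, dense, and hereditary subset of the hyperspace of compact sets. Given distinct points x_0, ..., x_n in X and r > 0, there exist distinct points y_0, ..., y_n in X such that d(x_i, y_i) < r for all i ∈ {0,...,n} and the finite set {y_0, ..., y_n} belongs to U. -/
open TopologicalSpace

theorem perturb_finite_set_into_open_dense_hereditary {X : Type*} [MetricSpace X]
    [PolishSpace X] (U : Set (NonemptyCompacts X)) (hopen : IsOpen U)
    (hdense : Dense U) (hher : Hereditary U) (n : ℕ) (x : Fin (n + 1) → X)
    (hx : Function.Injective x) (r : ℝ) (hr : 0 < r) :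
    ∃ (y : Fin (n + 1) → X) (K : NonemptyCompacts X),
      Function.Injective y ∧ (∀ i, dist (x i) (y i) < r) ∧
        (K : Set X) = Set.range y ∧ K ∈ U := by
  have hpos : ∀ i j : Fin (n + 1), i ≠ j → 0 < dist (x i) (x j) := fun i j h =>
    dist_pos.2 fun e => h (hx e)
  obtain ⟨ε, hε0, hεr, hεsep⟩ :
      ∃ ε > 0, ε ≤ r ∧ ∀ i j : Fin (n + 1), i ≠ j → 2 * ε < dist (x i) (x j) := by
    classical
    set P : Finset (Fin (n + 1) × Fin (n + 1)) :=
      Finset.univ.filter (fun p => p.1 ≠ p.2) with hP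
    by_cases hPne : P.Nonempty
    · set m := P.inf' hPne (fun p => dist (x p.1) (x p.2)) with hm
      have hm0 : 0 < m := by
        rw [hm, Finset.lt_inf'_iff]
        intro p hp
        exact hpos p.1 p.2 (by simpa [hP] using hp)
      refine ⟨min r (m / 3), lt_min hr (by linarith), min_le_left _ _, fun i j hij => ?_⟩
      have hmem : (i, j) ∈ P := by simp [hP, hij]
      have hle : m ≤ dist (x i) (x j) := Finset.inf'_le _ hmem
      have : min r (m / 3) ≤ m / 3 := min_le_right _ _
      linarith
    · refine ⟨r, hr, le_refl _, fun i j hij => absurd ?_ hPne⟩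
      exact ⟨(i, j), by simp [hP, hij]⟩
  set K₀ : NonemptyCompacts X :=
    ⟨⟨Set.range x, (Set.finite_range x).isCompact⟩, Set.range_nonempty x⟩ with hK₀
  obtain ⟨K, hKU, hKd⟩ : ∃ K ∈ U, dist K₀ K < ε :=
    Metric.mem_closure_iff.1 (hdense K₀) ε hε0
  have hne : EMetric.hausdorffEdist (K₀ : Set X) (K : Set X) ≠ ⊤ :=
    Metric.hausdorffEdist_ne_top_of_nonempty_of_bounded K₀.nonempty K.nonempty
      K₀.isCompact.isBounded K.isCompact.isBounded
  have hHd : Metric.hausdorffDist (K₀ : Set X) (K : Set X) < ε := by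
    rwa [Metric.NonemptyCompacts.dist_eq] at hKd
  have hyex : ∀ i : Fin (n + 1), ∃ z ∈ (K : Set X), dist (x i) z < ε := fun i =>
    Metric.exists_dist_lt_of_hausdorffDist_lt (by exact Set.mem_range_self i) hHd hne
  choose y hyK hyd using hyex
  have hyinj : Function.Injective y := by
    intro i j hij
    by_contra h
    have h1 : dist (x i) (x j) ≤ dist (x i) (y i) + dist (y j) (x j) := by
      rw [hij]; exact dist_triangle _ _ _
    have h2 := hεsep i j h
    have h3 : dist (y j) (x j) < ε := by rw [dist_comm]; exact hyd j
    linarith [hyd i]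
  refine ⟨y, ⟨⟨Set.range y, (Set.finite_range y).isCompact⟩, Set.range_nonempty y⟩,
    hyinj, fun i => lt_of_lt_of_le (hyd i) hεr, rfl, ?_⟩
  exact hher K hKU _ (Set.range_subset_iff.2 hyK)
end

section
/- Let X be a Polish space, U ⊆ K(X) open, dense, and hereditary, and ε > 0. Then the set G_{U,ε} = {μ ∈ P(X) : there exists K ∈ U with μ(K) ≥ 1 − ε} contains a dense open subset of P(X); in particular it is comeager in P(X). -/
open TopologicalSpace MeasureTheory

open Metric Set Filter
open scoped ENNReal NNReal

open Classical in
/-- Maps `x` to `y z` for the first center `z` in the list whose `θ`-ball contains `x`,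
and to `y₀` if there is none. -/
noncomputable def pickFn {X : Type*} [MetricSpace X] (θ : ℝ) (y : X → X) (y₀ : X) :
    List X → X → X
  | [] => fun _ => y₀
  | z :: l => (Metric.ball z θ).piecewise (fun _ => y z) (pickFn θ y y₀ l)

lemma pickFn_mem {X : Type*} [MetricSpace X] {θ : ℝ} {y : X → X} {y₀ : X} {S : Set X}
    (hy : ∀ z, y z ∈ S) (h0 : y₀ ∈ S) (l : List X) (x : X) : pickFn θ y y₀ l x ∈ S := by
  classical
  induction l with
  | nil => exact h0
  | cons z l ih =>
    by_cases hx : x ∈ Metric.ball z θ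
    · simp only [pickFn, Set.piecewise_eq_of_mem _ _ _ hx]; exact hy z
    · simp only [pickFn, Set.piecewise_eq_of_notMem _ _ _ hx]; exact ih

lemma measurable_pickFn {X : Type*} [MetricSpace X] [MeasurableSpace X] [OpensMeasurableSpace X]
    (θ : ℝ) (y : X → X) (y₀ : X) (l : List X) : Measurable (pickFn θ y y₀ l) := by
  classical
  induction l with
  | nil => exact measurable_const
  | cons z l ih =>
    exact Measurable.piecewise measurableSet_ball measurable_const ih

lemma dist_pickFn_lt {X : Type*} [MetricSpace X] {θ : ℝ} {y : X → X} {y₀ : X} {K0 : Set X}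
    (l : List X) (H : ∀ z ∈ l, ∀ x ∈ Metric.ball z θ ∩ K0, dist x (y z) < 3 * θ)
    {x : X} (hx : x ∈ K0) (hc : ∃ z ∈ l, x ∈ Metric.ball z θ) :
    dist x (pickFn θ y y₀ l x) < 3 * θ := by
  classical
  induction l with
  | nil => simp at hc
  | cons z l ih =>
    by_cases hxz : x ∈ Metric.ball z θ
    · simp only [pickFn, Set.piecewise_eq_of_mem _ _ _ hxz]
      exact H z (List.mem_cons_self) x ⟨hxz, hx⟩
    · simp only [pickFn, Set.piecewise_eq_of_notMem _ _ _ hxz]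
      refine ih (fun w hw => H w (List.mem_cons_of_mem _ hw)) ?_
      obtain ⟨w, hwl, hxw⟩ := hc
      rcases List.mem_cons.mp hwl with rfl | hwl
      · exact absurd hxw hxz
      · exact ⟨w, hwl, hxw⟩

/-- Tightness: a finite Borel measure on a Polish space almost lives on a compact set. -/
lemma exists_isCompact_measure_compl_lt {X : Type*} [TopologicalSpace X] [PolishSpace X]
    [MeasurableSpace X] [OpensMeasurableSpace X] (μ : MeasureTheory.Measure X)
    [IsFiniteMeasure μ] {η : ℝ≥0∞} (hη : η ≠ 0) :
    ∃ K : Set X, IsCompact K ∧ μ Kᶜ < η := by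
  letI := upgradeIsCompletelyMetrizable X
  rcases isEmpty_or_nonempty X with hX | hX
  · refine ⟨∅, isCompact_empty, ?_⟩
    have h0 : μ (∅ : Set X)ᶜ = 0 := by
      rw [Set.compl_empty, Set.univ_eq_empty_iff.mpr hX, measure_empty]
    rw [h0]; exact pos_iff_ne_zero.mpr hη
  obtain ⟨δ, δpos, hδsum⟩ := ENNReal.exists_pos_sum_of_countable hη ℕ
  obtain ⟨u, hu⟩ := TopologicalSpace.exists_dense_seq X
  have key : ∀ n : ℕ, ∃ N : ℕ,
      μ (⋃ i ∈ Set.Iio N, Metric.closedBall (u i) ((n + 1 : ℝ)⁻¹))ᶜ < δ n := by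
    intro n
    set r : ℝ := (n + 1 : ℝ)⁻¹ with hr
    have hrpos : 0 < r := by positivity
    set T : ℕ → Set X := fun N => ⋃ i ∈ Set.Iio N, Metric.closedBall (u i) r with hT
    have hTmeas : ∀ N, MeasurableSet (T N) := fun N =>
      MeasurableSet.biUnion (Set.to_countable _) fun i _ => measurableSet_closedBall
    have hTmono : Monotone T := fun a b hab =>
      Set.biUnion_subset_biUnion_left (fun i hi => lt_of_lt_of_le hi hab)
    have hTunion : ⋃ N, T N = Set.univ := by
      refine Set.eq_univ_of_forall fun x => ?_
      obtain ⟨i, hi⟩ := hu.exists_dist_lt x hrpos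
      exact Set.mem_iUnion.mpr ⟨i + 1, Set.mem_biUnion (Nat.lt_succ_self i)
        (Metric.mem_closedBall.mpr hi.le)⟩
    have htend : Tendsto (fun N => μ (T N)) atTop (nhds (μ Set.univ)) := by
      have := MeasureTheory.tendsto_measure_iUnion_atTop (μ := μ) hTmono
      rwa [hTunion] at this
    have hδn : (0 : ℝ≥0∞) < δ n := ENNReal.coe_pos.mpr (δpos n)
    by_cases hle : μ Set.univ < δ n
    · exact ⟨0, lt_of_le_of_lt (measure_mono (Set.subset_univ _)) hle⟩
    push_neg at hle
    have hμ0 : μ Set.univ ≠ 0 := by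
      intro h0
      rw [h0] at hle
      exact hδn.ne' (le_zero_iff.mp hle)
    have hhalf : (δ n : ℝ≥0∞) / 2 ≠ 0 := by
      simp only [ne_eq, ENNReal.div_eq_zero_iff]; push_neg
      exact ⟨hδn.ne', by norm_num⟩
    have hclt : μ Set.univ - (δ n : ℝ≥0∞) / 2 < μ Set.univ :=
      ENNReal.sub_lt_self (measure_ne_top μ _) hμ0 hhalf
    obtain ⟨N, hN⟩ := (htend.eventually_const_lt hclt).exists
    refine ⟨N, ?_⟩
    have h2 : (δ n : ℝ≥0∞) / 2 ≤ μ Set.univ :=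
      le_trans (le_trans ENNReal.half_le_self hle) le_rfl
    have h3 : μ Set.univ < μ (T N) + δ n := by
      calc μ Set.univ = (μ Set.univ - (δ n : ℝ≥0∞) / 2) + (δ n : ℝ≥0∞) / 2 :=
            (tsub_add_cancel_of_le h2).symm
        _ < μ (T N) + (δ n : ℝ≥0∞) / 2 :=
            ENNReal.add_lt_add_right (by simp [ENNReal.div_eq_top]) hN
        _ ≤ μ (T N) + δ n := add_le_add le_rfl ENNReal.half_le_self
    rw [measure_compl (hTmeas N) (measure_ne_top μ _)]
    rw [ENNReal.sub_lt_iff_lt_right (measure_ne_top μ _) (measure_mono (Set.subset_univ _))]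
    rwa [add_comm]
  choose N hN using key
  set S : ℕ → Set X := fun n => ⋃ i ∈ Set.Iio (N n), Metric.closedBall (u i) ((n + 1 : ℝ)⁻¹)
    with hS
  refine ⟨⋂ n, S n, ?_, ?_⟩
  · refine TotallyBounded.isCompact_of_isClosed ?_ ?_
    · rw [Metric.totallyBounded_iff]
      intro ρ hρ
      obtain ⟨n, hn⟩ := exists_nat_one_div_lt hρ
      refine ⟨u '' Set.Iio (N n), (Set.finite_Iio _).image u, ?_⟩
      refine (Set.iInter_subset _ n).trans ?_
      refine Set.iUnion₂_subset fun i hi => ?_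
      have hsub : Metric.closedBall (u i) ((n + 1 : ℝ)⁻¹) ⊆ Metric.ball (u i) ρ := by
        apply Metric.closedBall_subset_ball
        rwa [one_div] at hn
      exact hsub.trans (Set.subset_biUnion_of_mem (u := fun y => Metric.ball y ρ) (Set.mem_image_of_mem u hi))
    · exact isClosed_iInter fun n =>
        (Set.finite_Iio _).isClosed_biUnion fun i _ => Metric.isClosed_closedBall
  · have hcompl : (⋂ n, S n)ᶜ = ⋃ n, (S n)ᶜ := by rw [Set.compl_iInter]
    rw [hcompl]
    calc μ (⋃ n, (S n)ᶜ) ≤ ∑' n, μ (S n)ᶜ := measure_iUnion_le _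
      _ ≤ ∑' n, (δ n : ℝ≥0∞) := ENNReal.tsum_le_tsum fun n => (hN n).le
      _ < η := hδsum

/-- Inner regularity with respect to compact sets of open sets, for finite measures on
Polish spaces. -/
lemma exists_isCompact_subset_open_lt {X : Type*} [MetricSpace X] [PolishSpace X]
    [MeasurableSpace X] [BorelSpace X] (μ : MeasureTheory.Measure X) [IsFiniteMeasure μ]
    {V : Set X} (hV : IsOpen V) {c : ℝ≥0∞} (hc : c < μ V) :
    ∃ C : Set X, IsCompact C ∧ C ⊆ V ∧ c < μ C := by
  obtain ⟨F, hFV, hFc, hcF⟩ := hV.exists_lt_isClosed hc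
  have h1 : μ F - c ≠ 0 := by
    rw [ne_eq, tsub_eq_zero_iff_le, not_le]; exact hcF
  obtain ⟨K, hK, hKc⟩ := exists_isCompact_measure_compl_lt μ h1
  refine ⟨F ∩ K, hK.inter_left hFc, Set.inter_subset_left.trans hFV, ?_⟩
  have h2 : μ F ≤ μ (F ∩ K) + μ Kᶜ := by
    calc μ F ≤ μ ((F ∩ K) ∪ Kᶜ) := measure_mono fun x hx => by
          by_cases hxK : x ∈ K
          · exact Or.inl ⟨hx, hxK⟩
          · exact Or.inr hxK
      _ ≤ μ (F ∩ K) + μ Kᶜ := measure_union_le _ _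
  have hcne : c ≠ ∞ := (lt_of_lt_of_le hc le_top).ne
  have h3 : c + μ Kᶜ < μ F := by
    calc c + μ Kᶜ < c + (μ F - c) := ENNReal.add_lt_add_left hcne hKc
      _ = μ F := add_tsub_cancel_of_le hcF.le
  exact (ENNReal.add_lt_add_iff_right (measure_ne_top μ Kᶜ)).mp (h3.trans_le h2)

/-- An open hereditary set of compacts contains, with each member, all nonempty compact
subsets of a small thickening of that member. -/
lemma exists_thickening_hereditary_mod {X : Type*} [MetricSpace X]
    {U : Set (NonemptyCompacts X)} (hopen : IsOpen U) (hher : Hereditary U)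
    {K : NonemptyCompacts X} (hK : K ∈ U) :
    ∃ δ : ℝ, 0 < δ ∧
      ∀ C : NonemptyCompacts X, (C : Set X) ⊆ Metric.thickening δ (K : Set X) → C ∈ U := by
  obtain ⟨δ', hδ', hball⟩ := Metric.isOpen_iff.mp hopen K hK
  refine ⟨δ' / 2, by linarith, fun C hC => ?_⟩
  have hCK : C ⊔ K ∈ U := by
    apply hball
    rw [Metric.mem_ball, NonemptyCompacts.dist_eq]
    have hle : Metric.hausdorffDist ((C ⊔ K : NonemptyCompacts X) : Set X) (K : Set X)
        ≤ δ' / 2 := by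
      rw [NonemptyCompacts.coe_sup]
      apply Metric.hausdorffDist_le_of_mem_dist (by linarith)
      · intro x hx
        rcases hx with hx | hx
        · obtain ⟨y, hy, hxy⟩ := Metric.mem_thickening_iff.mp (hC hx)
          exact ⟨y, hy, hxy.le⟩
        · exact ⟨x, hx, by rw [dist_self]; linarith⟩
      · intro y hy
        exact ⟨y, Or.inr hy, by rw [dist_self]; linarith⟩
    exact lt_of_le_of_lt hle (by linarith)
  refine hher _ hCK C ?_
  rw [NonemptyCompacts.coe_sup]
  exact Set.subset_union_left

/-- The set of probability measures giving an open set at most measure `c` is closed in the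
topology of weak convergence. -/
lemma isClosed_levelSet_open {X : Type*} [MetricSpace X] [MeasurableSpace X]
    [OpensMeasurableSpace X] {G : Set X} (hG : IsOpen G) (c : ℝ≥0∞) :
    IsClosed {μ : ProbabilityMeasure X | (μ : MeasureTheory.Measure X) G ≤ c} := by
  set S := {μ : ProbabilityMeasure X | (μ : MeasureTheory.Measure X) G ≤ c} with hSdef
  refine isClosed_of_closure_subset fun μ hμ => ?_
  haveI : (nhdsWithin μ S).NeBot := mem_closure_iff_nhdsWithin_neBot.mp hμ
  have ht : Tendsto (id : ProbabilityMeasure X → ProbabilityMeasure X)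
      (nhdsWithin μ S) (nhds μ) := tendsto_id.mono_left nhdsWithin_le_nhds
  have hlim := ProbabilityMeasure.le_liminf_measure_open_of_tendsto ht hG
  refine hlim.trans (Filter.liminf_le_of_frequently_le' ?_)
  exact Filter.Eventually.frequently (eventually_mem_nhdsWithin.mono fun ν hν => hν)


section Main

variable {X : Type*} [MetricSpace X]

/-- The auxiliary dense open set of measures. -/
def goodSet [MeasurableSpace X] (U : Set (NonemptyCompacts X)) (c : ℝ≥0∞) :
    Set (ProbabilityMeasure X) :=
  ⋃ (K : NonemptyCompacts X) (δ : ℝ) (_ : K ∈ U) (_ : 0 < δ)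
    (_ : ∀ C : NonemptyCompacts X, (C : Set X) ⊆ Metric.thickening δ (K : Set X) → C ∈ U),
    {μ : ProbabilityMeasure X |
      c < (μ : MeasureTheory.Measure X) (Metric.thickening δ (K : Set X))}

lemma isOpen_goodSet [MeasurableSpace X] [OpensMeasurableSpace X]
    (U : Set (NonemptyCompacts X)) (c : ℝ≥0∞) : IsOpen (goodSet U c) := by
  refine isOpen_iUnion fun K => isOpen_iUnion fun δ => isOpen_iUnion fun _ =>
    isOpen_iUnion fun _ => isOpen_iUnion fun _ => ?_
  have heq : {μ : ProbabilityMeasure X |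
      c < (μ : MeasureTheory.Measure X) (Metric.thickening δ (K : Set X))}
      = {μ : ProbabilityMeasure X |
      (μ : MeasureTheory.Measure X) (Metric.thickening δ (K : Set X)) ≤ c}ᶜ := by
    ext ν; simp [not_le]
  rw [heq]
  exact (isClosed_levelSet_open Metric.isOpen_thickening c).isOpen_compl

lemma goodSet_subset [PolishSpace X] [MeasurableSpace X] [BorelSpace X]
    (U : Set (NonemptyCompacts X)) {ε : ℝ} (hε : 0 < ε) :
    goodSet U (ENNReal.ofReal (1 - ε)) ⊆ {μ : ProbabilityMeasure X |
      ∃ K ∈ U, 1 - ε ≤ (μ ((K : NonemptyCompacts X) : Set X) : ℝ)} := by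
  intro μ hμ
  simp only [goodSet, Set.mem_iUnion] at hμ
  obtain ⟨K, δ, hKU, hδpos, hP, hμm⟩ := hμ
  rw [Set.mem_setOf_eq] at hμm
  by_cases h1 : 1 - ε ≤ 0
  · exact ⟨K, hKU, h1.trans (μ (K : Set X)).coe_nonneg⟩
  push_neg at h1
  obtain ⟨C, hCcomp, hCsub, hCmeas⟩ := exists_isCompact_subset_open_lt
    (μ : MeasureTheory.Measure X) Metric.isOpen_thickening hμm
  have hc0 : (0 : ℝ≥0∞) < ENNReal.ofReal (1 - ε) := ENNReal.ofReal_pos.mpr (by linarith)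
  have hCne : C.Nonempty :=
    MeasureTheory.nonempty_of_measure_ne_zero (hc0.trans hCmeas).ne'
  refine ⟨⟨⟨C, hCcomp⟩, hCne⟩, hP _ hCsub, ?_⟩
  have h2 : (1 : ℝ) - ε ≤ ((μ : MeasureTheory.Measure X) C).toReal := by
    have := ENNReal.toReal_mono (MeasureTheory.measure_ne_top _ C) hCmeas.le
    rwa [ENNReal.toReal_ofReal (by linarith)] at this
  exact h2

set_option maxHeartbeats 2000000 in
lemma dense_goodSet [PolishSpace X] [MeasurableSpace X] [BorelSpace X]
    {U : Set (NonemptyCompacts X)} (hopen : IsOpen U) (hdense : Dense U)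
    (hher : Hereditary U) {ε : ℝ} (hε : 0 < ε) :
    Dense (goodSet U (ENNReal.ofReal (1 - ε))) := by
  classical
  have hc1 : ENNReal.ofReal (1 - ε) < 1 := by
    rw [← ENNReal.ofReal_one]
    exact (ENNReal.ofReal_lt_ofReal_iff one_pos).mpr (by linarith)
  intro μ
  set h := MeasureTheory.LevyProkhorov.probabilityMeasureHomeomorph (Ω := X) with hh
  suffices hcl : h μ ∈ closure (h '' goodSet U (ENNReal.ofReal (1 - ε))) by
    rw [← h.image_closure] at hcl
    obtain ⟨ν, hν, hνeq⟩ := hcl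
    rwa [← h.injective hνeq]
  rw [Metric.mem_closure_iff]
  intro r hr
  have hθpos : 0 < r / 4 := by positivity
  -- X is nonempty
  have hXne : Nonempty X := by
    by_contra hX
    rw [not_nonempty_iff] at hX
    have h1 : (μ : MeasureTheory.Measure X) Set.univ = 1 := measure_univ
    rw [Set.univ_eq_empty_iff.mpr hX, measure_empty] at h1
    exact zero_ne_one h1
  obtain ⟨x0⟩ := hXne
  -- a big compact set
  obtain ⟨K1, hK1c, hK1m⟩ := exists_isCompact_measure_compl_lt
    (μ : MeasureTheory.Measure X) (η := ENNReal.ofReal (r / 4))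
    (ENNReal.ofReal_pos.mpr hθpos).ne'
  have hK0c : IsCompact (K1 ∪ {x0}) := hK1c.union isCompact_singleton
  have hK0ne : (K1 ∪ {x0}).Nonempty := ⟨x0, Or.inr rfl⟩
  have hK0m : (μ : MeasureTheory.Measure X) (K1 ∪ {x0})ᶜ ≤ ENNReal.ofReal (r / 4) :=
    le_trans (measure_mono (Set.compl_subset_compl.mpr Set.subset_union_left)) hK1m.le
  -- a member of U close to K0
  obtain ⟨K, hKball, hKU⟩ := Metric.dense_iff.mp hdense ⟨⟨K1 ∪ {x0}, hK0c⟩, hK0ne⟩ (r / 4) hθpos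
  have hKdist : Metric.hausdorffDist (K : Set X) (K1 ∪ {x0}) < r / 4 := by
    have := Metric.mem_ball.mp hKball
    rwa [NonemptyCompacts.dist_eq] at this
  have hKfin : EMetric.hausdorffEdist (K : Set X) (K1 ∪ {x0}) ≠ ⊤ :=
    Metric.hausdorffEdist_ne_top_of_nonempty_of_bounded K.nonempty hK0ne
      K.isCompact.isBounded hK0c.isBounded
  obtain ⟨y₀, hy₀⟩ := K.nonempty
  -- choice of well-placed points in K
  have hy : ∀ z : X, ∃ w, w ∈ (K : Set X) ∧
      ∀ x ∈ Metric.ball z (r / 4) ∩ (K1 ∪ {x0}), dist x w < 3 * (r / 4) := by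
    intro z
    by_cases hz : (Metric.ball z (r / 4) ∩ (K1 ∪ {x0})).Nonempty
    · obtain ⟨x1, hx1b, hx1K⟩ := hz
      obtain ⟨w, hwK, hw⟩ := Metric.exists_dist_lt_of_hausdorffDist_lt' hx1K hKdist hKfin
      refine ⟨w, hwK, fun x hx => ?_⟩
      have d1 : dist x x1 < 2 * (r / 4) := by
        calc dist x x1 ≤ dist x z + dist z x1 := dist_triangle _ _ _
          _ < r / 4 + r / 4 := add_lt_add (Metric.mem_ball.mp hx.1)
              (by rw [dist_comm]; exact Metric.mem_ball.mp hx1b)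
          _ = 2 * (r / 4) := by ring
      calc dist x w ≤ dist x x1 + dist x1 w := dist_triangle _ _ _
        _ < 2 * (r / 4) + r / 4 := add_lt_add d1 (by rwa [dist_comm] at hw)
        _ = 3 * (r / 4) := by ring
    · exact ⟨y₀, hy₀, fun x hx => absurd ⟨x, hx⟩ hz⟩
  choose y hyK hyd using hy
  -- finite ball cover of K0
  obtain ⟨t, htfin, htcov⟩ := Metric.totallyBounded_iff.mp hK0c.totallyBounded (r / 4) hθpos
  have hfmeas : Measurable (pickFn (r / 4) y y₀ htfin.toFinset.toList) :=
    measurable_pickFn _ y y₀ _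
  have hfK : ∀ x, pickFn (r / 4) y y₀ htfin.toFinset.toList x ∈ (K : Set X) :=
    fun x => pickFn_mem hyK hy₀ _ x
  have hfd : ∀ x ∈ K1 ∪ {x0}, dist x (pickFn (r / 4) y y₀ htfin.toFinset.toList x)
      < 3 * (r / 4) := by
    intro x hx
    refine dist_pickFn_lt _ (fun z _ x' hx' => hyd z x' hx') hx ?_
    obtain ⟨z, hz, hxz⟩ := Set.mem_iUnion₂.mp (htcov hx)
    exact ⟨z, Finset.mem_toList.mpr (htfin.mem_toFinset.mpr hz), hxz⟩
  -- the approximating measure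
  haveI : IsProbabilityMeasure
      ((μ : MeasureTheory.Measure X).map (pickFn (r / 4) y y₀ htfin.toFinset.toList)) :=
    MeasureTheory.Measure.isProbabilityMeasure_map hfmeas.aemeasurable
  refine ⟨h ⟨(μ : MeasureTheory.Measure X).map (pickFn (r / 4) y y₀ htfin.toFinset.toList),
    inferInstance⟩, Set.mem_image_of_mem h ?_, ?_⟩
  · -- membership in the good set
    obtain ⟨δ, hδpos, hδprop⟩ := exists_thickening_hereditary_mod hopen hher hKU
    simp only [goodSet, Set.mem_iUnion]
    refine Set.mem_iUnion_of_mem K (Set.mem_iUnion_of_mem δ (Set.mem_iUnion_of_mem hKU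
      (Set.mem_iUnion_of_mem hδpos (Set.mem_iUnion_of_mem hδprop ?_))))
    show ENNReal.ofReal (1 - ε) < _
    have hpre : pickFn (r / 4) y y₀ htfin.toFinset.toList ⁻¹'
        Metric.thickening δ (K : Set X) = Set.univ :=
      Set.eq_univ_of_forall fun x =>
        Metric.self_subset_thickening hδpos (K : Set X) (hfK x)
    have hone : ((⟨(μ : MeasureTheory.Measure X).map
        (pickFn (r / 4) y y₀ htfin.toFinset.toList), inferInstance⟩ :
        ProbabilityMeasure X) : MeasureTheory.Measure X)
        (Metric.thickening δ (K : Set X)) = 1 := by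
      show ((μ : MeasureTheory.Measure X).map (pickFn (r / 4) y y₀ htfin.toFinset.toList))
        (Metric.thickening δ (K : Set X)) = 1
      rw [MeasureTheory.Measure.map_apply hfmeas Metric.isOpen_thickening.measurableSet,
        hpre, measure_univ]
    exact hc1.trans_le (le_of_eq hone.symm)
  · -- distance estimate
    have hLP : MeasureTheory.levyProkhorovDist (μ : MeasureTheory.Measure X)
        ((μ : MeasureTheory.Measure X).map (pickFn (r / 4) y y₀ htfin.toFinset.toList))
        ≤ 3 * (r / 4) := by
      have h3θ : (0 : ℝ) ≤ 3 * (r / 4) := by positivity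
      refine MeasureTheory.levyProkhorovDist_le_of_forall_le _ _ h3θ ?_
      intro ε' B hε' hB
      have hsub : B ∩ (K1 ∪ {x0}) ⊆ pickFn (r / 4) y y₀ htfin.toFinset.toList ⁻¹'
          Metric.thickening ε' B := by
        rintro x ⟨hxB, hxK0⟩
        refine Metric.mem_thickening_iff.mpr ⟨x, hxB, ?_⟩
        rw [dist_comm]
        exact lt_trans (hfd x hxK0) (by linarith)
      calc (μ : MeasureTheory.Measure X) B
          ≤ (μ : MeasureTheory.Measure X) ((B ∩ (K1 ∪ {x0})) ∪ (K1 ∪ {x0})ᶜ) :=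
            measure_mono fun x hx => by
              by_cases hxK : x ∈ K1 ∪ {x0}
              · exact Or.inl ⟨hx, hxK⟩
              · exact Or.inr hxK
        _ ≤ (μ : MeasureTheory.Measure X) (B ∩ (K1 ∪ {x0}))
            + (μ : MeasureTheory.Measure X) (K1 ∪ {x0})ᶜ := measure_union_le _ _
        _ ≤ ((μ : MeasureTheory.Measure X).map (pickFn (r / 4) y y₀ htfin.toFinset.toList))
            (Metric.thickening ε' B) + ENNReal.ofReal ε' := by
            refine add_le_add ?_ ?_
            · rw [MeasureTheory.Measure.map_apply hfmeas
                Metric.isOpen_thickening.measurableSet]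
              exact measure_mono hsub
            · exact le_trans hK0m (ENNReal.ofReal_le_ofReal (by linarith))
    rw [MeasureTheory.LevyProkhorov.dist_probabilityMeasure_def]
    refine lt_of_le_of_lt hLP ?_
    linarith

end Main

theorem measures_concentrated_on_open_dense_hereditary {X : Type*} [MetricSpace X]
    [PolishSpace X] [MeasurableSpace X] [BorelSpace X]
    (U : Set (NonemptyCompacts X)) (hopen : IsOpen U) (hdense : Dense U)
    (hher : Hereditary U) (ε : ℝ) (hε : 0 < ε) :
    ∃ D : Set (ProbabilityMeasure X), IsOpen D ∧ Dense D ∧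
      D ⊆ {μ : ProbabilityMeasure X |
        ∃ K ∈ U, 1 - ε ≤ (μ ((K : NonemptyCompacts X) : Set X) : ℝ)} := by
  refine ⟨goodSet U (ENNReal.ofReal (1 - ε)), isOpen_goodSet U _,
    dense_goodSet hopen hdense hher hε, goodSet_subset U hε⟩
end

section
/- Let G be a Polish group and C ⊆ G a closed nowhere dense set with 1 ∉ C. Then the set U = {K ∈ K(G) : K⁻¹K ∩ C = ∅} is an open, hereditary, and dense subset of K(G). -/
open TopologicalSpace Pointwise

open Metric Set

/-- The set of nonempty compacts contained in an open set is open. -/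
lemma isOpen_subsets_of_isOpen {X : Type*} [MetricSpace X] {W : Set X} (hW : IsOpen W) :
    IsOpen {L : NonemptyCompacts X | (L : Set X) ⊆ W} := by
  rw [Metric.isOpen_iff]
  intro L hL
  obtain ⟨δ, hδ, hthick⟩ := L.isCompact.exists_thickening_subset_open hW hL
  refine ⟨δ, hδ, fun L' hL' => ?_⟩
  intro x hx
  have hfin : EMetric.hausdorffEdist (L' : Set X) (L : Set X) ≠ ⊤ :=
    Metric.hausdorffEdist_ne_top_of_nonempty_of_bounded L'.nonempty L.nonempty
      L'.isCompact.isBounded L.isCompact.isBounded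
  have hdist : Metric.hausdorffDist (L' : Set X) (L : Set X) < δ := by
    rw [Metric.mem_ball, NonemptyCompacts.dist_eq] at hL'
    exact hL'
  obtain ⟨y, hy, hxy⟩ := Metric.exists_dist_lt_of_hausdorffDist_lt hx hdist hfin
  exact hthick (Metric.mem_thickening_iff.2 ⟨y, hy, hxy⟩)

section main

variable {G : Type*} [Group G] [MetricSpace G] [IsTopologicalGroup G]

lemma dense_open_avoid (C : Set G) (hC : IsClosed C) (hnwd : interior C = ∅)
    {s : Set G} (hs : s.Finite) :
    IsOpen {y : G | ∀ a ∈ s, ¬(a⁻¹ * y ∈ C) ∧ ¬(y⁻¹ * a ∈ C)} ∧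
      Dense {y : G | ∀ a ∈ s, ¬(a⁻¹ * y ∈ C) ∧ ¬(y⁻¹ * a ∈ C)} := by
  refine Set.Finite.induction_on s hs ?_ ?_
  · simp
  · intro x s hxs hsfin ih
    have hset : {y : G | ∀ a ∈ insert x s, ¬(a⁻¹ * y ∈ C) ∧ ¬(y⁻¹ * a ∈ C)} =
        ({y : G | ¬(x⁻¹ * y ∈ C) ∧ ¬(y⁻¹ * x ∈ C)} ∩
          {y : G | ∀ a ∈ s, ¬(a⁻¹ * y ∈ C) ∧ ¬(y⁻¹ * a ∈ C)}) := by
      ext y; simp [forall_and, or_imp, Set.mem_insert_iff]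
      tauto
    have h1 : {y : G | ¬(x⁻¹ * y ∈ C) ∧ ¬(y⁻¹ * x ∈ C)} =
        ((Homeomorph.mulLeft x⁻¹) ⁻¹' C)ᶜ ∩
          (((Homeomorph.inv G).trans (Homeomorph.mulRight x)) ⁻¹' C)ᶜ := by
      ext y
      simp [Homeomorph.mulLeft, Homeomorph.mulRight, Homeomorph.inv]
    have hopen1 : IsOpen {y : G | ¬(x⁻¹ * y ∈ C) ∧ ¬(y⁻¹ * x ∈ C)} := by
      rw [h1]
      exact (((Homeomorph.mulLeft x⁻¹).isClosed_preimage.2 hC).isOpen_compl).inter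
        ((((Homeomorph.inv G).trans (Homeomorph.mulRight x)).isClosed_preimage.2 hC).isOpen_compl)
    have hdense1 : Dense {y : G | ¬(x⁻¹ * y ∈ C) ∧ ¬(y⁻¹ * x ∈ C)} := by
      rw [h1]
      have d1 : Dense (((Homeomorph.mulLeft x⁻¹) ⁻¹' C)ᶜ) := by
        rw [← interior_eq_empty_iff_dense_compl, ← Homeomorph.preimage_interior, hnwd,
          Set.preimage_empty]
      have d2 : Dense ((((Homeomorph.inv G).trans (Homeomorph.mulRight x)) ⁻¹' C)ᶜ) := by
        rw [← interior_eq_empty_iff_dense_compl, ← Homeomorph.preimage_interior, hnwd,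
          Set.preimage_empty]
      exact d1.inter_of_isOpen_left d2
        ((Homeomorph.mulLeft x⁻¹).isClosed_preimage.2 hC).isOpen_compl
    rw [hset]
    exact ⟨hopen1.inter ih.1,
      hdense1.inter_of_isOpen_left (ih.2) hopen1 |>.mono (by exact fun y hy => hy) |>.mono
        subset_rfl⟩

lemma exists_perturbation (C : Set G) (hC : IsClosed C) (hnwd : interior C = ∅)
    (h1 : (1 : G) ∉ C) {s : Set G} (hs : s.Finite) {δ : ℝ} (hδ : 0 < δ) :
    ∃ f : G → G, (∀ x ∈ s, dist (f x) x < δ) ∧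
      ∀ a ∈ s, ∀ b ∈ s, (f a)⁻¹ * f b ∉ C := by
  classical
  refine Set.Finite.induction_on s hs ?_ ?_
  · exact ⟨id, by simp, by simp⟩
  · intro x s hxs hsfin ih
    obtain ⟨f, hfd, hfc⟩ := ih
    have him : (f '' s).Finite := hsfin.image f
    obtain ⟨_, hDdense⟩ := dense_open_avoid C hC hnwd him
    obtain ⟨y, hy⟩ := hDdense.inter_open_nonempty (Metric.ball x δ) Metric.isOpen_ball
      ⟨x, Metric.mem_ball_self hδ⟩
    obtain ⟨hyball, hyD⟩ := hy
    refine ⟨Function.update f x y, ?_, ?_⟩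
    · intro z hz
      rcases Set.mem_insert_iff.1 hz with rfl | hz'
      · rwa [Function.update_self, ← Metric.mem_ball]
      · rw [Function.update_of_ne (fun h => hxs (by rw [← h]; exact hz'))]
        exact hfd z hz'
    · intro a ha b hb
      rcases Set.mem_insert_iff.1 ha with rfl | ha' <;>
        rcases Set.mem_insert_iff.1 hb with hb | hb'
      · subst hb
        rw [Function.update_self, inv_mul_cancel]
        exact h1
      · rw [Function.update_self, Function.update_of_ne (fun h => hxs (by rw [← h]; exact hb'))]
        exact (hyD (f b) ⟨b, hb', rfl⟩).2
      · subst hb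
        rw [Function.update_self, Function.update_of_ne (fun h => hxs (by rw [← h]; exact ha'))]
        exact (hyD (f a) ⟨a, ha', rfl⟩).1
      · rw [Function.update_of_ne (fun h => hxs (by rw [← h]; exact ha')),
          Function.update_of_ne (fun h => hxs (by rw [← h]; exact hb'))]
        exact hfc a ha' b hb'

end main

theorem avoiding_set_open_hereditary_dense {G : Type*} [Group G] [MetricSpace G]
    [IsTopologicalGroup G] [PolishSpace G] (C : Set G) (hC : IsClosed C)
    (hnwd : interior C = ∅) (h1 : (1 : G) ∉ C) :
    IsOpen {K : NonemptyCompacts G | ((K : Set G)⁻¹ * (K : Set G)) ∩ C = ∅} ∧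
      Hereditary {K : NonemptyCompacts G | ((K : Set G)⁻¹ * (K : Set G)) ∩ C = ∅} ∧
      Dense {K : NonemptyCompacts G | ((K : Set G)⁻¹ * (K : Set G)) ∩ C = ∅} := by
  refine ⟨?_, ?_, ?_⟩
  · -- openness
    rw [isOpen_iff_mem_nhds]
    intro K hK
    have hsub : ((K : Set G) ×ˢ (K : Set G)) ⊆ (fun p : G × G => p.1⁻¹ * p.2) ⁻¹' Cᶜ := by
      rintro ⟨a, b⟩ ⟨ha, hb⟩
      intro hmem
      have : a⁻¹ * b ∈ ((K : Set G)⁻¹ * (K : Set G)) ∩ C :=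
        ⟨Set.mul_mem_mul (Set.inv_mem_inv.2 ha) hb, hmem⟩
      rw [hK] at this
      exact this
    have hcont : Continuous (fun p : G × G => p.1⁻¹ * p.2) :=
      (continuous_fst.inv).mul continuous_snd
    obtain ⟨u, v, hu, hv, hKu, hKv, huv⟩ :=
      generalized_tube_lemma K.isCompact K.isCompact (hC.isOpen_compl.preimage hcont) hsub
    refine Filter.mem_of_superset
      ((isOpen_subsets_of_isOpen (hu.inter hv)).mem_nhds
        (Set.subset_inter hKu hKv : (K : Set G) ⊆ u ∩ v)) ?_
    intro L hL
    rw [Set.mem_setOf_eq, Set.eq_empty_iff_forall_notMem]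
    rintro z ⟨hz, hzC⟩
    obtain ⟨a, ha, b, hb, rfl⟩ := hz
    have ha' : a⁻¹ ∈ (L : Set G) := Set.inv_mem_inv.1 (by simpa using ha)
    have : (a⁻¹, b) ∈ u ×ˢ v := ⟨(hL ha').1, (hL hb).2⟩
    have := huv this
    simp only [Set.mem_preimage, Set.mem_compl_iff, inv_inv] at this
    exact this hzC
  · -- hereditary
    intro K hK L hLK
    rw [Set.mem_setOf_eq, Set.eq_empty_iff_forall_notMem] at hK ⊢
    rintro z ⟨hz, hzC⟩
    exact hK z ⟨Set.mul_subset_mul (Set.inv_subset_inv.2 hLK) hLK hz, hzC⟩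
  · -- density
    rw [Metric.dense_iff]
    intro K r hr
    obtain ⟨t, hts, htfin, htcov⟩ := K.isCompact.finite_cover_balls (by positivity : (0:ℝ) < r/4)
    obtain ⟨f, hfd, hfc⟩ := exists_perturbation C hC hnwd h1 htfin
      (by positivity : (0:ℝ) < r/4)
    have htne : t.Nonempty := by
      obtain ⟨z, hz⟩ := K.nonempty
      obtain ⟨_, ⟨a, rfl⟩, h⟩ := htcov hz
      simp only [Set.mem_iUnion, exists_prop] at h
      exact ⟨a, h.1⟩
    have hSfin : (f '' t).Finite := htfin.image f
    have hSne : (f '' t).Nonempty := htne.image f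
    set K' : TopologicalSpace.NonemptyCompacts G :=
      ⟨⟨f '' t, hSfin.isCompact⟩, hSne⟩ with hK'
    refine ⟨K', ?_, ?_⟩
    · rw [Metric.mem_ball, NonemptyCompacts.dist_eq]
      have hle : Metric.hausdorffDist (K' : Set G) (K : Set G) ≤ r/2 := by
        apply Metric.hausdorffDist_le_of_mem_dist (by positivity)
        · rintro z ⟨a, ha, rfl⟩
          exact ⟨a, hts ha, le_of_lt (lt_of_lt_of_le (hfd a ha) (by linarith))⟩
        · intro z hz
          obtain ⟨w, ⟨a, rfl⟩, h⟩ := htcov hz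
          simp only [Set.mem_iUnion, exists_prop] at h
          obtain ⟨hat, hzball⟩ := h
          refine ⟨f a, ⟨a, hat, rfl⟩, ?_⟩
          have h1' : dist z a < r/4 := Metric.mem_ball.1 hzball
          have h2' : dist a (f a) < r/4 := by rw [dist_comm]; exact hfd a hat
          calc dist z (f a) ≤ dist z a + dist a (f a) := dist_triangle _ _ _
            _ ≤ r/2 := by linarith
      linarith
    · rw [Set.mem_setOf_eq, Set.eq_empty_iff_forall_notMem]
      rintro z ⟨hz, hzC⟩
      obtain ⟨x, hx, y, hy, rfl⟩ := hz
      have hx' : x⁻¹ ∈ (K' : Set G) := Set.inv_mem_inv.1 (by simpa using hx)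
      obtain ⟨a, ha, hax⟩ := hx'
      obtain ⟨b, hb, hby⟩ := hy
      have hzC' : x * y ∈ C := hzC
      have heq : x * y = (f a)⁻¹ * f b := by rw [hax, hby, inv_inv]
      rw [heq] at hzC'
      exact hfc a ha b hb hzC'
end

section
/- Let G be an uncountable Polish group that is not locally compact. Then every compact subset K of G is generically left Haar-null; that is, {μ ∈ P(G) : μ(gK) = 0 for all g ∈ G} is comeager in P(G). -/
open MeasureTheory Topology Metric Filter Set
open scoped ENNReal NNReal Pointwise BoundedContinuousFunction
set_option linter.unusedSectionVars false
set_option maxHeartbeats 1000000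

namespace CGHN


variable {G : Type*} [MetricSpace G] [MeasurableSpace G] [BorelSpace G]

variable {ι : Type*} [Fintype ι]

noncomputable def disc (c : ι → ℝ≥0∞) (x : ι → G) : Measure G :=
  ∑ i, c i • Measure.dirac (x i)

lemma disc_univ (c : ι → ℝ≥0∞) (x : ι → G) : disc c x Set.univ = ∑ i, c i := by
  simp [disc, Measure.finset_sum_apply, Measure.smul_apply, smul_eq_mul]

lemma isProbabilityMeasure_disc {c : ι → ℝ≥0∞} {x : ι → G} (h : ∑ i, c i = 1) :
    IsProbabilityMeasure (disc c x) := ⟨by rw [disc_univ, h]⟩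

noncomputable def discPM (c : ι → ℝ≥0∞) (x : ι → G) (h : ∑ i, c i = 1) :
    ProbabilityMeasure G := ⟨disc c x, isProbabilityMeasure_disc h⟩

lemma coeFn_le_one_of_sum_eq_one {c : ι → ℝ≥0∞} (h : ∑ i, c i = 1) (i : ι) : c i ≤ 1 := by
  rw [← h]; exact Finset.single_le_sum (fun _ _ => zero_le) (Finset.mem_univ i)

lemma ne_top_of_sum_eq_one {c : ι → ℝ≥0∞} (h : ∑ i, c i = 1) (i : ι) : c i ≠ ∞ :=
  ne_top_of_le_ne_top ENNReal.one_ne_top (coeFn_le_one_of_sum_eq_one h i)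

lemma integral_disc {c : ι → ℝ≥0∞} (hc : ∀ i, c i ≠ ∞) (x : ι → G) (f : G →ᵇ ℝ) :
    ∫ a, f a ∂(disc c x) = ∑ i, (c i).toReal * f (x i) := by
  rw [disc, integral_finset_sum_measure]
  · refine Finset.sum_congr rfl fun i _ => ?_
    rw [integral_smul_measure, integral_dirac, smul_eq_mul]
  · intro i _
    exact (f.integrable _).smul_measure (hc i)

lemma continuous_discPM (c : ι → ℝ≥0∞) (h : ∑ i, c i = 1) :
    Continuous fun x : ι → G => discPM c x h := by
  rw [continuous_iff_continuousAt]
  intro x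
  refine ProbabilityMeasure.tendsto_iff_forall_integral_tendsto.mpr fun f => ?_
  have : ∀ y : ι → G, ∫ a, f a ∂((discPM c y h : Measure G)) = ∑ i, (c i).toReal * f (y i) :=
    fun y => integral_disc (ne_top_of_sum_eq_one h) y f
  simp only [this]
  exact (Continuous.tendsto (by fun_prop) x)

lemma dense_disc [Nonempty G] [SecondCountableTopology G] (μ₀ : ProbabilityMeasure G)
    {V : Set (ProbabilityMeasure G)} (hV : V ∈ 𝓝 μ₀) :
    ∃ (N : ℕ) (x : Fin N → G) (c : Fin N → ℝ≥0∞) (h : ∑ i, c i = 1),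
      0 < N ∧ discPM c x h ∈ V := by
  obtain ⟨z, hz⟩ := TopologicalSpace.exists_dense_seq G
  have hex : ∀ (m : ℕ) (a : G), ∃ k, dist a (z k) < ((m : ℝ) + 1)⁻¹ := fun m a =>
    denseRange_iff.mp hz a _ (by positivity)
  set idx : ℕ → G → ℕ := fun m a => Nat.find (hex m a) with hidx
  have hidx_spec : ∀ m a, dist a (z (idx m a)) < ((m : ℝ) + 1)⁻¹ := fun m a =>
    Nat.find_spec (hex m a)
  have hpre : ∀ m n, (idx m) ⁻¹' {n} =
      Metric.ball (z n) ((m : ℝ) + 1)⁻¹ ∩ ⋂ j ∈ Finset.range n, (Metric.ball (z j) ((m : ℝ) + 1)⁻¹)ᶜ := by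
    intro m n; ext a
    simp only [mem_preimage, mem_singleton_iff, hidx, Nat.find_eq_iff, mem_inter_iff, mem_ball,
      Finset.mem_range, mem_iInter, mem_compl_iff]
  have hidx_meas : ∀ m, Measurable (idx m) := by
    intro m
    refine measurable_to_countable' fun n => ?_
    rw [hpre]
    exact (measurableSet_ball).inter
      (MeasurableSet.biInter (Finset.range n).countable_toSet fun j _ => measurableSet_ball.compl)
  set T : ℕ → G → G := fun m a => z (idx m a) with hT
  have hT_meas : ∀ m, Measurable (T m) := fun m => measurable_from_nat.comp (hidx_meas m)
  have hT_tendsto : ∀ a, Tendsto (fun m => T m a) atTop (𝓝 a) := by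
    intro a
    rw [tendsto_iff_dist_tendsto_zero]
    refine squeeze_zero (fun m => dist_nonneg) (fun m => (dist_comm (T m a) a ▸ (hidx_spec m a).le))
      ?_
    simpa [one_div] using tendsto_one_div_add_atTop_nhds_zero_nat (𝕜 := ℝ)
  set P : ℕ → ℕ → Set G := fun m k => (idx m) ⁻¹' {k} with hPdef
  have hP_meas : ∀ m k, MeasurableSet (P m k) := fun m k => (hidx_meas m) (measurableSet_singleton k)
  have hSeq : ∀ m N, {a | idx m a < N} = ⋃ k ∈ Finset.range N, P m k := by
    intro m N; ext a
    simp [hPdef]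
  have hS_meas : ∀ m N, MeasurableSet {a | idx m a < N} := by
    intro m N; rw [hSeq]
    exact (Finset.range N).measurableSet_biUnion fun k _ => hP_meas m k
  -- choice of N m
  have hchoice : ∀ m : ℕ, ∃ N : ℕ, 0 < N ∧
      1 - ((m : ℝ≥0∞) + 1)⁻¹ < (μ₀ : Measure G) {a | idx m a < N} := by
    intro m
    have hmono : Monotone fun N : ℕ => {a | idx m a < N} := fun i j hij a ha => lt_of_lt_of_le ha hij
    have hun : (⋃ N : ℕ, {a | idx m a < N}) = univ := by
      ext a; simp only [mem_iUnion, mem_setOf_eq, mem_univ, iff_true]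
      exact ⟨idx m a + 1, Nat.lt_succ_self _⟩
    have htm := tendsto_measure_iUnion_atTop (μ := (μ₀ : Measure G)) hmono
    rw [hun, measure_univ] at htm
    have hlt : 1 - ((m : ℝ≥0∞) + 1)⁻¹ < 1 :=
      ENNReal.sub_lt_self ENNReal.one_ne_top one_ne_zero
        (ENNReal.inv_ne_zero.mpr (by simp))
    have := (htm.eventually (eventually_gt_nhds hlt)).and (eventually_gt_atTop 0)
    obtain ⟨N, h1, h2⟩ := this.exists
    exact ⟨N, h2, h1⟩
  choose N hNpos hN using hchoice
  set w : ℕ → ℕ → ℝ≥0∞ := fun m k => (μ₀ : Measure G) (P m k) with hw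
  have hw_ne_top : ∀ m k, w m k ≠ ∞ := fun m k => measure_ne_top _ _
  have hsumw : ∀ m, ∑ k ∈ Finset.range (N m), w m k = (μ₀ : Measure G) {a | idx m a < N m} := by
    intro m
    rw [hSeq]
    rw [measure_biUnion_finset ?_ fun k _ => hP_meas m k]
    intro i _ j _ hij
    simp only [Function.onFun, hPdef]
    exact Disjoint.preimage _ (by simpa using hij)
  set tail : ℕ → ℝ≥0∞ := fun m => 1 - (μ₀ : Measure G) {a | idx m a < N m} with htaildef
  have htail_le : ∀ m, tail m ≤ ((m : ℝ≥0∞) + 1)⁻¹ := by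
    intro m
    rw [htaildef]
    refine tsub_le_iff_right.mpr ?_
    calc (1                 : ℝ≥0∞) = (1 - ((m : ℝ≥0∞) + 1)⁻¹) + ((m : ℝ≥0∞) + 1)⁻¹ := by
          rw [tsub_add_cancel_of_le]
          exact ENNReal.inv_le_one.mpr (by simp)
      _ ≤ (μ₀ : Measure G) {a | idx m a < N m} + ((m : ℝ≥0∞) + 1)⁻¹ := by
          gcongr
          exact (hN m).le
      _ = ((m : ℝ≥0∞) + 1)⁻¹ + (μ₀ : Measure G) {a | idx m a < N m} := by ring
  have htail_ne_top : ∀ m, tail m ≠ ∞ := fun m =>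
    ne_top_of_le_ne_top (by simp) ((htail_le m).trans (ENNReal.inv_le_one.mpr (by simp)))
  set k0 : ∀ m, Fin (N m) := fun m => ⟨0, hNpos m⟩ with hk0
  set c : ∀ m, Fin (N m) → ℝ≥0∞ := fun m k => w m k + (if k = k0 m then tail m else 0) with hc
  have hsum : ∀ m, ∑ k, c m k = 1 := by
    intro m
    rw [hc]
    simp only
    rw [Finset.sum_add_distrib, Finset.sum_ite_eq' Finset.univ (k0 m) fun _ => tail m]
    simp only [Finset.mem_univ, if_true]
    have : ∑ k : Fin (N m), w m k = ∑ k ∈ Finset.range (N m), w m k :=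
      Fin.sum_univ_eq_sum_range _ _
    rw [this, hsumw m, htaildef]
    exact add_tsub_cancel_of_le prob_le_one
  set ν : ℕ → ProbabilityMeasure G := fun m => discPM (c m) (fun k => z k) (hsum m) with hν
  -- convergence
  have hconv : Tendsto ν atTop (𝓝 μ₀) := by
    refine ProbabilityMeasure.tendsto_iff_forall_integral_tendsto.mpr fun f => ?_
    set g : ℕ → G → ℝ := fun m a => f (T m a) with hg
    have hg_meas : ∀ m, Measurable (g m) := fun m => f.continuous.measurable.comp (hT_meas m)
    have hg_bound : ∀ m a, ‖g m a‖ ≤ ‖f‖ := fun m a => f.norm_coe_le_norm _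
    have hg_int : ∀ m, Integrable (g m) (μ₀ : Measure G) := fun m =>
      Integrable.mono' (integrable_const ‖f‖) (hg_meas m).aestronglyMeasurable
        (ae_of_all _ (hg_bound m))
    -- value of the discrete integral
    have hIm : ∀ m, ∫ a, f a ∂((ν m : Measure G)) =
        (∑ k ∈ Finset.range (N m), (w m k).toReal * f (z k)) + (tail m).toReal * f (z 0) := by
      intro m
      rw [hν]
      simp only
      rw [show ((discPM (c m) (fun k : Fin (N m) => z k) (hsum m) : ProbabilityMeasure G) :
        Measure G) = disc (c m) (fun k : Fin (N m) => z k) from rfl]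
      rw [integral_disc (ne_top_of_sum_eq_one (hsum m)) _ f]
      have : ∀ k : Fin (N m), (c m k).toReal * f (z k) =
          (w m k).toReal * f (z k) + (if k = k0 m then (tail m).toReal * f (z 0) else 0) := by
        intro k
        by_cases hk : k = k0 m
        · subst hk
          have hck : c m (k0 m) = w m ((k0 m : Fin (N m)) : ℕ) + tail m := by
            rw [hc]; simp
          have hval : ((k0 m : Fin (N m)) : ℕ) = 0 := rfl
          rw [hck, hval, ENNReal.toReal_add (hw_ne_top m _) (htail_ne_top m), if_pos rfl]
          ring
        · rw [hc]; simp [hk]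
      rw [Finset.sum_congr rfl fun k _ => this k, Finset.sum_add_distrib,
        Finset.sum_ite_eq' Finset.univ (k0 m) fun _ => (tail m).toReal * f (z 0)]
      simp only [Finset.mem_univ, if_true]
      congr 1
      exact Fin.sum_univ_eq_sum_range (fun k => (w m k).toReal * f (z k)) (N m)
    -- the finite sum equals a set integral
    have hsum_int : ∀ m, ∑ k ∈ Finset.range (N m), (w m k).toReal * f (z k) =
        ∫ a in {a | idx m a < N m}, g m a ∂(μ₀ : Measure G) := by
      intro m
      rw [hSeq]
      rw [integral_biUnion_finset (Finset.range (N m)) (fun k _ => hP_meas m k)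
        (fun i _ j hj hij => Disjoint.preimage _ (by simpa using hij))
        (fun k _ => (hg_int m).integrableOn)]
      refine Finset.sum_congr rfl fun k _ => ?_
      have heq : EqOn (g m) (fun _ => f (z k)) (P m k) := by
        intro a ha
        have : idx m a = k := ha
        simp only [hg, hT, this]
      rw [setIntegral_congr_fun (hP_meas m k) heq, setIntegral_const]
      simp [hw, smul_eq_mul, mul_comm]
      exact Or.inl rfl
    -- error bound
    have herr : ∀ m, dist (∫ a, f a ∂((ν m : Measure G))) (∫ a, g m a ∂(μ₀ : Measure G)) ≤
        2 * ‖f‖ * ((m : ℝ) + 1)⁻¹ := by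
      intro m
      have hsplit : ∫ a, g m a ∂(μ₀ : Measure G) =
          (∫ a in {a | idx m a < N m}, g m a ∂(μ₀ : Measure G)) +
          ∫ a in {a | idx m a < N m}ᶜ, g m a ∂(μ₀ : Measure G) :=
        (integral_add_compl (hS_meas m (N m)) (hg_int m)).symm
      rw [Real.dist_eq, hIm m, hsplit]
      have htail_real : (tail m).toReal ≤ ((m : ℝ) + 1)⁻¹ := by
        have := ENNReal.toReal_mono (by simp) (htail_le m)
        simpa [ENNReal.toReal_add] using this
      have hcompl_meas : (μ₀ : Measure G) {a | idx m a < N m}ᶜ = tail m := by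
        rw [htaildef]
        exact prob_compl_eq_one_sub (hS_meas m (N m))
      have h1 : |(tail m).toReal * f (z 0)| ≤ ‖f‖ * ((m : ℝ) + 1)⁻¹ := by
        rw [abs_mul, abs_of_nonneg ENNReal.toReal_nonneg]
        calc (tail m).toReal * |f (z 0)| ≤ ((m : ℝ) + 1)⁻¹ * ‖f‖ := by
              apply mul_le_mul htail_real (f.norm_coe_le_norm (z 0)) (abs_nonneg _)
                (by positivity)
          _ = ‖f‖ * ((m : ℝ) + 1)⁻¹ := by ring
      have h2 : ‖∫ a in {a | idx m a < N m}ᶜ, g m a ∂(μ₀ : Measure G)‖ ≤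
          ‖f‖ * ((m : ℝ) + 1)⁻¹ := by
        have := norm_setIntegral_le_of_norm_le_const (C := ‖f‖)
          (μ := (μ₀ : Measure G)) (s := {a | idx m a < N m}ᶜ)
          (measure_lt_top _ _) (fun x _ => hg_bound m x)
        · refine this.trans ?_
          rw [measureReal_def, hcompl_meas]
          exact mul_le_mul_of_nonneg_left htail_real (norm_nonneg f)
      calc |∑ k ∈ Finset.range (N m), (w m k).toReal * f (z k) + (tail m).toReal * f (z 0) -
            ((∫ a in {a | idx m a < N m}, g m a ∂(μ₀ : Measure G)) +
             ∫ a in {a | idx m a < N m}ᶜ, g m a ∂(μ₀ : Measure G))| =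
          |(tail m).toReal * f (z 0) - ∫ a in {a | idx m a < N m}ᶜ, g m a ∂(μ₀ : Measure G)| := by
            rw [hsum_int m]; ring_nf
        _ ≤ |(tail m).toReal * f (z 0)| +
            |∫ a in {a | idx m a < N m}ᶜ, g m a ∂(μ₀ : Measure G)| := abs_sub _ _
        _ ≤ ‖f‖ * ((m : ℝ) + 1)⁻¹ + ‖f‖ * ((m : ℝ) + 1)⁻¹ := add_le_add h1 (h2)
        _ = 2 * ‖f‖ * ((m : ℝ) + 1)⁻¹ := by ring
    have hdom : Tendsto (fun m => ∫ a, g m a ∂(μ₀ : Measure G)) atTop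
        (𝓝 (∫ a, f a ∂(μ₀ : Measure G))) := by
      refine tendsto_integral_of_dominated_convergence (fun _ => ‖f‖)
        (fun m => (hg_meas m).aestronglyMeasurable) (integrable_const _)
        (fun m => ae_of_all _ (hg_bound m)) (ae_of_all _ fun a => ?_)
      exact (f.continuous.tendsto a).comp (hT_tendsto a)
    rw [tendsto_iff_dist_tendsto_zero]
    refine squeeze_zero (fun m => dist_nonneg) (fun m =>
      (dist_triangle _ (∫ a, g m a ∂(μ₀ : Measure G)) _).trans
        (add_le_add_left (herr m) _)) ?_
    have l1 : Tendsto (fun m : ℕ => 2 * ‖f‖ * ((m : ℝ) + 1)⁻¹) atTop (𝓝 0) := by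
      have : Tendsto (fun m : ℕ => ((m : ℝ) + 1)⁻¹) atTop (𝓝 0) := by
        simpa [one_div] using tendsto_one_div_add_atTop_nhds_zero_nat (𝕜 := ℝ)
      simpa using this.const_mul (2 * ‖f‖)
    have l2 : Tendsto (fun m => dist (∫ a, g m a ∂(μ₀ : Measure G))
        (∫ a, f a ∂(μ₀ : Measure G))) atTop (𝓝 0) := tendsto_iff_dist_tendsto_zero.mp hdom
    simpa using l1.add l2
  have hev : ∀ᶠ m in atTop, ν m ∈ V := hconv hV
  obtain ⟨m, hm⟩ := hev.exists
  exact ⟨N m, fun k => z k, c m, hsum m, hNpos m, hm⟩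



variable {G : Type*} [MetricSpace G] [Group G] [IsTopologicalGroup G]

lemma exists_free_points [BaireSpace G] (C : Set G) (hC : IsClosed C)
    (hCi : interior C = ∅) (N : ℕ) (p : Fin N → G) {ρ : ℝ} (hρ : 0 < ρ) :
    ∃ x : Fin N → G, (∀ i, dist (x i) (p i) < ρ) ∧ ∀ i j, i ≠ j → (x i)⁻¹ * x j ∉ C := by
  induction N with
  | zero => exact ⟨Fin.elim0, fun i => i.elim0, fun i => i.elim0⟩
  | succ n ih =>
    obtain ⟨x, hx1, hx2⟩ := ih (fun i => p i.castSucc)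
    have hCi' : interior (C⁻¹) = ∅ := by
      rw [interior_eq_empty_iff_dense_compl] at hCi ⊢
      have := (Function.Surjective.denseRange (inv_surjective (G := G))).dense_image
        continuous_inv hCi
      have himg : (Inv.inv '' Cᶜ : Set G) = (C⁻¹)ᶜ := by
        ext a
        constructor
        · rintro ⟨b, hb, rfl⟩
          simpa [Set.mem_inv] using hb
        · intro ha
          exact ⟨a⁻¹, by simpa [Set.mem_inv] using ha, inv_inv a⟩
      rwa [himg] at this
    have hdense : Dense (⋂ i : Fin n, ((x i • C)ᶜ ∩ (x i • C⁻¹)ᶜ)) := by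
      apply dense_of_mem_residual
      rw [Filter.iInter_mem]
      intro i
      refine Filter.inter_mem ?_ ?_
      · exact residual_of_dense_open (hC.smul (x i)).isOpen_compl
          (by rw [← interior_eq_empty_iff_dense_compl, interior_smul, hCi, smul_set_empty])
      · exact residual_of_dense_open ((hC.inv).smul (x i)).isOpen_compl
          (by rw [← interior_eq_empty_iff_dense_compl, interior_smul, hCi', smul_set_empty])
    obtain ⟨y, hy1, hy2⟩ := hdense.exists_mem_open isOpen_ball
      ⟨p (Fin.last n), mem_ball_self hρ⟩
    simp only [mem_iInter, mem_inter_iff, mem_compl_iff] at hy1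
    refine ⟨Fin.snoc x y, ?_, ?_⟩
    · intro i
      refine Fin.lastCases ?_ ?_ i
      · rw [Fin.snoc_last]; exact mem_ball.mp hy2
      · intro j; rw [Fin.snoc_castSucc]; exact hx1 j
    · intro i j
      induction i using Fin.lastCases with
      | last =>
        induction j using Fin.lastCases with
        | last => intro h; exact absurd rfl h
        | cast b =>
          intro _
          rw [Fin.snoc_last, Fin.snoc_castSucc]
          intro hmem
          exact (hy1 b).2 (by
            rw [mem_smul_set_iff_inv_smul_mem, smul_eq_mul, Set.mem_inv, mul_inv_rev, inv_inv]
            exact hmem)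
      | cast a =>
        induction j using Fin.lastCases with
        | last =>
          intro _
          rw [Fin.snoc_last, Fin.snoc_castSucc]
          intro hmem
          exact (hy1 a).1 (by rw [mem_smul_set_iff_inv_smul_mem, smul_eq_mul]; exact hmem)
        | cast b =>
          intro hij
          rw [Fin.snoc_castSucc, Fin.snoc_castSucc]
          exact hx2 a b (fun h => hij (by rw [h]))

lemma exists_conj_nhds (C : Set G) (hC : IsClosed C) {q : G} (hq : q ∉ C) :
    ∃ U : Set G, IsOpen U ∧ (1 : G) ∈ U ∧ ∀ u ∈ U, ∀ v ∈ U, ∀ c ∈ C, u * c * v⁻¹ ≠ q := by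
  have hcont : Continuous fun uv : G × G => uv.1⁻¹ * q * uv.2 := by fun_prop
  have h1 : (fun uv : G × G => uv.1⁻¹ * q * uv.2) ((1 : G), (1 : G)) ∈ Cᶜ := by simpa using hq
  have hmem : (fun uv : G × G => uv.1⁻¹ * q * uv.2) ⁻¹' Cᶜ ∈ 𝓝 ((1 : G), (1 : G)) :=
    hcont.continuousAt.preimage_mem_nhds (hC.isOpen_compl.mem_nhds h1)
  rw [nhds_prod_eq, Filter.mem_prod_iff] at hmem
  obtain ⟨U₁, hU₁, U₂, hU₂, hsub⟩ := hmem
  obtain ⟨W₁, hW₁s, hW₁o, hW₁1⟩ := _root_.mem_nhds_iff.mp hU₁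
  obtain ⟨W₂, hW₂s, hW₂o, hW₂1⟩ := _root_.mem_nhds_iff.mp hU₂
  refine ⟨W₁ ∩ W₂, hW₁o.inter hW₂o, ⟨hW₁1, hW₂1⟩, ?_⟩
  intro u hu v hv cc hc h
  have hp : (u, v) ∈ U₁ ×ˢ U₂ := ⟨hW₁s hu.1, hW₂s hv.2⟩
  have hnc : u⁻¹ * q * v ∉ C := hsub hp
  apply hnc
  have : u⁻¹ * q * v = cc := by rw [← h]; group
  rwa [this]



lemma polish_baire {α : Type*} [TopologicalSpace α] [PolishSpace α] : BaireSpace α := by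
  letI := TopologicalSpace.upgradeIsCompletelyMetrizable α; infer_instance

variable {G : Type*} [MetricSpace G] [MeasurableSpace G] [BorelSpace G]

noncomputable def bump (x : G) {r : ℝ} (hr : 0 < r) : G →ᵇ ℝ :=
  BoundedContinuousFunction.ofNormedAddCommGroup (fun y => max (1 - dist y x / r) 0)
    (by fun_prop) 1 (by
      intro y
      rw [Real.norm_eq_abs, abs_le]
      have h0 : 0 ≤ dist y x / r := by positivity
      constructor
      · have := le_max_right (1 - dist y x / r) 0; linarith
      · refine max_le (by linarith) zero_le_one)

lemma bump_apply (x : G) {r : ℝ} (hr : 0 < r) (y : G) :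
    bump x hr y = max (1 - dist y x / r) 0 := rfl

lemma bump_self (x : G) {r : ℝ} (hr : 0 < r) : bump x hr x = 1 := by
  rw [bump_apply]; simp

lemma bump_nonneg (x : G) {r : ℝ} (hr : 0 < r) (y : G) : 0 ≤ bump x hr y :=
  le_max_right _ _

lemma bump_le_one (x : G) {r : ℝ} (hr : 0 < r) (y : G) : bump x hr y ≤ 1 := by
  rw [bump_apply]
  have h0 : 0 ≤ dist y x / r := by positivity
  exact max_le (by linarith) zero_le_one

lemma dist_lt_of_bump_pos {x : G} {r : ℝ} {hr : 0 < r} {y : G} (h : 0 < bump x hr y) :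
    dist y x < r := by
  rw [bump_apply] at h
  rcases max_cases (1 - dist y x / r) 0 with ⟨he, _⟩ | ⟨he, _⟩
  · rw [he] at h
    have : dist y x / r < 1 := by linarith
    calc dist y x = dist y x / r * r := by field_simp
      _ < 1 * r := by exact mul_lt_mul_of_pos_right this hr
      _ = r := one_mul r
  · rw [he] at h; exact absurd h (lt_irrefl 0)


end CGHN

open CGHN in
theorem compact_generically_left_haar_null {G : Type*} [Group G] [MetricSpace G]
    [IsTopologicalGroup G] [PolishSpace G] [MeasurableSpace G] [BorelSpace G]
    [Uncountable G] (hnlc : ¬ LocallyCompactSpace G) (K : Set G)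
    (hK : IsCompact K) :
    {μ : ProbabilityMeasure G | ∀ g : G, μ ((fun x => g * x) '' K) = 0} ∈
      residual (ProbabilityMeasure G) := by
  classical
  rcases K.eq_empty_or_nonempty with rfl | hKne
  · have : {μ : ProbabilityMeasure G | ∀ g : G, μ ((fun x => g * x) '' (∅ : Set G)) = 0} = univ := by
      apply eq_univ_of_forall
      intro μ g
      simp
    rw [this]; exact Filter.univ_mem
  haveI : BaireSpace G := polish_baire
  set C : Set G := K⁻¹ * K with hCdef
  have hCc : IsCompact C := hK.inv.mul hK
  have hCcl : IsClosed C := hCc.isClosed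
  have hCi : interior C = ∅ := by
    by_contra h
    obtain ⟨a, ha⟩ := nonempty_iff_ne_empty.mpr h
    exact hnlc (hCc.locallyCompactSpace_of_mem_nhds_of_group (mem_interior_iff_mem_nhds.mp ha))
  have h1C : (1 : G) ∈ C := by
    obtain ⟨k, hk⟩ := hKne
    have hm : k⁻¹ * k ∈ K⁻¹ * K := Set.mul_mem_mul (Set.inv_mem_inv.mpr hk) hk
    rw [inv_mul_cancel] at hm
    exact hm
  set U : ℕ → Set (ProbabilityMeasure G) := fun n =>
    {μ | ∃ W : Set (ProbabilityMeasure G), IsOpen W ∧ μ ∈ W ∧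
      ∀ ν ∈ W, ∀ g : G, ((ν : Measure G) ((fun x => g * x) '' K)) < ((n : ℝ≥0∞) + 1)⁻¹}
    with hUdef
  have hUopen : ∀ n, IsOpen (U n) := by
    intro n
    rw [isOpen_iff_mem_nhds]
    rintro μ ⟨W, hWo, hμW, hWp⟩
    exact Filter.mem_of_superset (hWo.mem_nhds hμW) (fun ν hν => ⟨W, hWo, hν, hWp⟩)
  have hUdense : ∀ n, Dense (U n) := by
    intro n
    rw [dense_iff_inter_open]
    rintro V hVo ⟨μ₀, hμ₀⟩
    obtain ⟨N, x0, c, hsum, hNpos, hx0V⟩ := dense_disc μ₀ (hVo.mem_nhds hμ₀)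
    set R : ℕ := 2 * (n + 1) with hRdef
    have hRpos : 0 < R := by positivity
    have hRne : ((R : ℝ≥0∞)) ≠ 0 := by
      simp [hRdef]
    have hRnetop : ((R : ℝ≥0∞)) ≠ ∞ := by simp
    set c' : Fin N × Fin R → ℝ≥0∞ := fun i => c i.1 / R with hc'def
    have hRsum : ∀ i : Fin N, ∑ _t : Fin R, c i / (R : ℝ≥0∞) = c i := by
      intro i
      rw [Finset.sum_const, Finset.card_univ, Fintype.card_fin, nsmul_eq_mul]
      exact ENNReal.mul_div_cancel hRne hRnetop
    have hsum' : ∑ j : Fin N × Fin R, c' j = 1 := by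
      rw [Fintype.sum_prod_type]
      simp only [hc'def]
      rw [Finset.sum_congr rfl (fun i _ => hRsum i)]
      exact hsum
    have hc'_top : ∀ j, c' j ≠ ∞ := ne_top_of_sum_eq_one hsum'
    set p' : Fin N × Fin R → G := fun j => x0 j.1 with hp'def
    have hsame : discPM c' p' hsum' = discPM c x0 hsum := by
      apply Subtype.ext
      show disc c' p' = disc c x0
      rw [disc, disc, Fintype.sum_prod_type]
      refine Finset.sum_congr rfl fun i _ => ?_
      show (∑ t : Fin R, (c i / R) • Measure.dirac (x0 i)) = c i • Measure.dirac (x0 i)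
      rw [← Finset.sum_smul, hRsum i]
    have hcont := (continuous_discPM c' hsum').continuousAt (x := p')
    have hpre : (fun y : Fin N × Fin R → G => discPM c' y hsum') ⁻¹' V ∈ 𝓝 p' := by
      apply hcont.preimage_mem_nhds
      rw [hsame]
      exact hVo.mem_nhds hx0V
    obtain ⟨ρ, hρpos, hball⟩ := Metric.mem_nhds_iff.mp hpre
    set e : Fin N × Fin R ≃ Fin (N * R) := finProdFinEquiv with hedef
    obtain ⟨x'', hx''d, hx''f⟩ := exists_free_points C hCcl hCi (N * R)
      (fun k => p' (e.symm k)) hρpos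
    set x : Fin N × Fin R → G := fun j => x'' (e j) with hxdef
    have hxd : ∀ j, dist (x j) (p' j) < ρ := by
      intro j
      have := hx''d (e j)
      rwa [Equiv.symm_apply_apply] at this
    have hfree : ∀ i j, i ≠ j → (x i)⁻¹ * x j ∉ C := by
      intro i j hij
      exact hx''f (e i) (e j) (fun h => hij (e.injective h))
    have hxV : discPM c' x hsum' ∈ V := by
      apply hball
      rw [mem_ball]
      exact (dist_pi_lt_iff hρpos).mpr hxd
    -- separation neighborhood
    have hUex : ∀ i j : Fin N × Fin R, ∃ Uij : Set G, IsOpen Uij ∧ (1 : G) ∈ Uij ∧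
        ∀ u ∈ Uij, ∀ v ∈ Uij, ∀ cc ∈ C, i ≠ j → u * cc * v⁻¹ ≠ (x i)⁻¹ * x j := by
      intro i j
      by_cases hij : i = j
      · exact ⟨univ, isOpen_univ, mem_univ _, fun u _ v _ cc _ hne => absurd hij hne⟩
      · obtain ⟨Uij, h1, h2, h3⟩ := exists_conj_nhds C hCcl (hfree i j hij)
        exact ⟨Uij, h1, h2, fun u hu v hv cc hc _ => h3 u hu v hv cc hc⟩
    choose Us hUso hUs1 hUsp using hUex
    set O : Set G := ⋂ i, ⋂ j, Us i j with hOdef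
    have hOo : IsOpen O := isOpen_iInter_of_finite fun i => isOpen_iInter_of_finite fun j =>
      hUso i j
    have hO1 : (1 : G) ∈ O := mem_iInter.mpr fun i => mem_iInter.mpr fun j => hUs1 i j
    have hOsub : ∀ i j, O ⊆ Us i j := fun i j => (iInter_subset _ i).trans (iInter_subset _ j)
    set S : Fin N × Fin R → Set G := fun i => x i • O with hSdef
    have hSo : ∀ i, IsOpen (S i) := fun i => hOo.smul (x i)
    have hxS : ∀ i, x i ∈ S i := fun i => ⟨1, hO1, mul_one (x i)⟩
    have hSmeas : ∀ i, MeasurableSet (S i) := fun i => (hSo i).measurableSet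
    have hSdisj : Pairwise (Function.onFun Disjoint S) := by
      intro i j hij
      rw [Function.onFun, Set.disjoint_left]
      rintro y ⟨u, hu, huy⟩ ⟨v, hv, hvy⟩
      have hxy : x i * u = x j * v := huy.trans hvy.symm
      have h2 : x i * u * v⁻¹ = x j := by rw [hxy, mul_inv_cancel_right]
      have he : u * 1 * v⁻¹ = (x i)⁻¹ * x j := by
        rw [mul_one, ← h2]; group
      exact hUsp i j u (hOsub i j hu) v (hOsub i j hv) 1 h1C hij he
    have hrex : ∀ i, ∃ r : ℝ, 0 < r ∧ ball (x i) r ⊆ S i := fun i =>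
      (Metric.isOpen_iff.mp (hSo i)) (x i) (hxS i)
    choose rr hrpos hrsub using hrex
    set M : ℕ := N * R with hMdef
    have hMpos : 0 < M := Nat.mul_pos hNpos hRpos
    set δ : ℝ := ((n : ℝ) + 1)⁻¹ / (4 * M) with hδdef
    have hδpos : 0 < δ := by
      rw [hδdef]
      have : (0:ℝ) < M := by exact_mod_cast hMpos
      positivity
    set W : Set (ProbabilityMeasure G) :=
      ⋂ i, {ν' : ProbabilityMeasure G |
        (c' i).toReal - δ < ∫ a, (bump (x i) (hrpos i)) a ∂(ν' : Measure G)} with hWdef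
    have hWo : IsOpen W := isOpen_iInter_of_finite fun i =>
      isOpen_lt continuous_const (ProbabilityMeasure.continuous_integral_boundedContinuousFunction _)
    have hνW : discPM c' x hsum' ∈ W := by
      rw [hWdef]
      refine mem_iInter.mpr fun i => ?_
      show (c' i).toReal - δ < ∫ a, bump (x i) (hrpos i) a ∂(disc c' x)
      rw [integral_disc hc'_top]
      have hterm : (c' i).toReal * bump (x i) (hrpos i) (x i) = (c' i).toReal := by
        rw [bump_self]; ring
      have hge : (c' i).toReal ≤ ∑ j, (c' j).toReal * bump (x i) (hrpos i) (x j) := by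
        rw [← hterm]
        exact Finset.single_le_sum
          (f := fun j => (c' j).toReal * bump (x i) (hrpos i) (x j))
          (fun j _ => mul_nonneg ENNReal.toReal_nonneg (bump_nonneg _ _ _)) (Finset.mem_univ i)
      linarith
    -- the uniform estimate on W
    have hbound : ∀ ν'' ∈ W, ∀ g : G,
        ((ν'' : Measure G) ((fun y => g * y) '' K)) < ((n : ℝ≥0∞) + 1)⁻¹ := by
      intro ν'' hW g
      set gK : Set G := (fun y => g * y) '' K with hgKdef
      set a : Fin N × Fin R → ℝ := fun i => ((ν'' : Measure G) (S i)).toReal with hadef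
      set b : ℝ := ((ν'' : Measure G) ((⋃ i, S i)ᶜ)).toReal with hbdef
      have h1 : ∀ i, (c' i).toReal - δ < a i := by
        intro i
        have hWi := mem_iInter.mp hW i
        have hle : ENNReal.ofReal (∫ y, bump (x i) (hrpos i) y ∂(ν'' : Measure G)) ≤
            (ν'' : Measure G) (S i) := by
          refine integral_le_measure (fun y _ => bump_le_one _ _ _) (fun y hy => ?_)
          by_contra hpos
          push_neg at hpos
          exact hy (hrsub i (mem_ball.mpr (dist_lt_of_bump_pos hpos)))
        have h0 : 0 ≤ ∫ y, bump (x i) (hrpos i) y ∂(ν'' : Measure G) :=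
          integral_nonneg (bump_nonneg _ _)
        have hmono := ENNReal.toReal_mono (measure_ne_top _ _) hle
        rw [ENNReal.toReal_ofReal h0] at hmono
        exact lt_of_lt_of_le hWi hmono
      have hpart : ∑ i, a i + b = 1 := by
        have hU1 : (ν'' : Measure G) (⋃ i, S i) = ∑' i, (ν'' : Measure G) (S i) :=
          measure_iUnion hSdisj hSmeas
        have hC2 : (ν'' : Measure G) (⋃ i, S i) + (ν'' : Measure G) ((⋃ i, S i)ᶜ) = 1 := by
          rw [measure_add_measure_compl (MeasurableSet.iUnion fun i => hSmeas i), measure_univ]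
        rw [hU1, tsum_fintype] at hC2
        have hsne : (∑ i, (ν'' : Measure G) (S i)) ≠ ∞ := by
          rw [← tsum_fintype (L := SummationFilter.unconditional _), ← hU1]; exact measure_ne_top _ _
        have h3 := congrArg ENNReal.toReal hC2
        rw [ENNReal.toReal_add hsne (measure_ne_top _ _),
          ENNReal.toReal_sum (fun i _ => measure_ne_top _ _), ENNReal.toReal_one] at h3
        exact h3
      have hNonempty : Nonempty (Fin N × Fin R) := ⟨(⟨0, hNpos⟩, ⟨0, hRpos⟩)⟩
      obtain ⟨i0, hi0⟩ : ∃ i0, gK ⊆ S i0 ∪ (⋃ i, S i)ᶜ := by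
        by_cases hex : ∃ i, (gK ∩ S i).Nonempty
        · obtain ⟨i0, y0, hy0K, hy0S⟩ := hex
          refine ⟨i0, fun y hy => ?_⟩
          by_cases hyU : y ∈ ⋃ i, S i
          · obtain ⟨i, hiS⟩ := mem_iUnion.mp hyU
            left
            have hii0 : i = i0 := by
              by_contra hne
              obtain ⟨k, hkK, hky⟩ := hy
              obtain ⟨k0, hk0K, hk0y⟩ := hy0K
              obtain ⟨u, hu, huy⟩ := hiS
              obtain ⟨v, hv, hvy⟩ := hy0S
              have hcC : k⁻¹ * k0 ∈ C := Set.mul_mem_mul (Set.inv_mem_inv.mpr hkK) hk0K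
              have e1 : x i * u = g * k := huy.trans hky.symm
              have e2 : x i0 * v = g * k0 := hvy.trans hk0y.symm
              have key : u * (k⁻¹ * k0) * v⁻¹ = (x i)⁻¹ * x i0 := by
                have hxi : x i = g * k * u⁻¹ := by rw [← e1, mul_inv_cancel_right]
                have hxi0 : x i0 = g * k0 * v⁻¹ := by rw [← e2, mul_inv_cancel_right]
                rw [hxi, hxi0]
                group
              exact hUsp i i0 u (hOsub i i0 hu) v (hOsub i i0 hv) _ hcC hne key
            rw [hii0] at hiS
            exact hiS
          · right; exact hyU
        · refine ⟨Classical.arbitrary _, fun y hy => Or.inr ?_⟩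
          intro hyU
          obtain ⟨i, hiS⟩ := mem_iUnion.mp hyU
          exact hex ⟨i, y, hy, hiS⟩
      have ht : ((ν'' : Measure G) gK).toReal ≤ a i0 + b := by
        have h1' : (ν'' : Measure G) gK ≤
            (ν'' : Measure G) (S i0) + (ν'' : Measure G) ((⋃ i, S i)ᶜ) :=
          (measure_mono hi0).trans (measure_union_le _ _)
        have h2' := ENNReal.toReal_mono
          (ENNReal.add_ne_top.mpr ⟨measure_ne_top _ _, measure_ne_top _ _⟩) h1'
        rwa [ENNReal.toReal_add (measure_ne_top _ _) (measure_ne_top _ _)] at h2'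
      -- arithmetic
      have e1 : ∑ i ∈ Finset.univ.erase i0, a i + a i0 = ∑ i, a i :=
        Finset.sum_erase_add _ _ (Finset.mem_univ i0)
      have e3 : ∑ i ∈ Finset.univ.erase i0, (c' i).toReal + (c' i0).toReal = 1 := by
        rw [Finset.sum_erase_add _ _ (Finset.mem_univ i0),
          ← ENNReal.toReal_sum (fun i _ => hc'_top i), hsum', ENNReal.toReal_one]
      have e4 : ∑ i ∈ Finset.univ.erase i0, ((c' i).toReal - δ) ≤
          ∑ i ∈ Finset.univ.erase i0, a i :=
        Finset.sum_le_sum (fun i _ => (h1 i).le)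
      have e5 : ∑ i ∈ Finset.univ.erase i0, ((c' i).toReal - δ) =
          (∑ i ∈ Finset.univ.erase i0, (c' i).toReal) -
            ((Finset.univ.erase i0).card : ℝ) * δ := by
        rw [Finset.sum_sub_distrib, Finset.sum_const, nsmul_eq_mul]
      have hcardδ : ((Finset.univ.erase i0).card : ℝ) * δ ≤ (M : ℝ) * δ := by
        have hcle : (Finset.univ.erase i0).card ≤ M := by
          calc (Finset.univ.erase i0).card ≤ Finset.univ.card := Finset.card_erase_le
            _ = Fintype.card (Fin N × Fin R) := rfl
            _ = M := by simp [hMdef]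
        exact mul_le_mul_of_nonneg_right (by exact_mod_cast hcle) hδpos.le
      have e6 : (c' i0).toReal ≤ ((n : ℝ) + 1)⁻¹ / 2 := by
        have hle1 : c' i0 ≤ 1 / (R : ℝ≥0∞) := by
          rw [hc'def]
          exact ENNReal.div_le_div (coeFn_le_one_of_sum_eq_one hsum i0.1) le_rfl
        have := ENNReal.toReal_mono (by rw [one_div]; exact ENNReal.inv_ne_top.mpr hRne) hle1
        have hR2 : ((1 : ℝ≥0∞) / (R : ℝ≥0∞)).toReal = ((n : ℝ) + 1)⁻¹ / 2 := by
          rw [one_div, ENNReal.toReal_inv]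
          have : ((R : ℝ≥0∞)).toReal = 2 * ((n : ℝ) + 1) := by
            rw [ENNReal.toReal_natCast, hRdef]; push_cast; ring
          rw [this]
          rw [mul_inv]
          ring
        rw [hR2] at this
        exact this
      have eδ : (M : ℝ) * δ = ((n : ℝ) + 1)⁻¹ / 4 := by
        rw [hδdef]
        have hM0 : (M : ℝ) ≠ 0 := by
          have : (0:ℝ) < M := by exact_mod_cast hMpos
          exact this.ne'
        field_simp
      have hβpos : (0 : ℝ) < ((n : ℝ) + 1)⁻¹ := by positivity
      have hfinal : ((ν'' : Measure G) gK).toReal < ((n : ℝ) + 1)⁻¹ := by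
        linarith
      have hne : (ν'' : Measure G) gK ≠ ∞ := measure_ne_top _ _
      rw [← ENNReal.toReal_lt_toReal hne (by simp)]
      have htr : (((n : ℝ≥0∞) + 1)⁻¹).toReal = ((n : ℝ) + 1)⁻¹ := by
        rw [ENNReal.toReal_inv, ENNReal.toReal_add (by simp) (by simp), ENNReal.toReal_natCast,
          ENNReal.toReal_one]
      rw [htr]
      exact hfinal
    exact ⟨discPM c' x hsum', hxV, W, hWo, hνW, hbound⟩
  have hres : ⋂ n, U n ∈ residual (ProbabilityMeasure G) :=
    countable_iInter_mem.mpr fun n => residual_of_dense_open (hUopen n) (hUdense n)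
  refine Filter.mem_of_superset hres ?_
  intro μ hμ g
  have hall : ∀ n : ℕ, (μ : Measure G) ((fun x => g * x) '' K) < ((n : ℝ≥0∞) + 1)⁻¹ := by
    intro n
    obtain ⟨W, _, hμW, hWp⟩ := mem_iInter.mp hμ n
    exact hWp μ hμW g
  have hzero : (μ : Measure G) ((fun x => g * x) '' K) = 0 := by
    by_contra h
    obtain ⟨m, hm⟩ := ENNReal.exists_inv_nat_lt h
    have h2 := hall m
    have h3 : ((m : ℝ≥0∞) + 1)⁻¹ ≤ ((m : ℝ≥0∞))⁻¹ := by
      gcongr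
      exact le_add_of_nonneg_right zero_le_one
    exact absurd (h2.trans_le (h3.trans hm.le)) (lt_irrefl _)
  have hcoe := ProbabilityMeasure.ennreal_coeFn_eq_coeFn_toMeasure μ ((fun x => g * x) '' K)
  have : ((μ ((fun x => g * x) '' K) : ℝ≥0) : ℝ≥0∞) = 0 := hcoe.trans hzero
  exact_mod_cast this
end

section
/- Let G₁ and G₂ be Polish groups each satisfying condition (C): for every analytic meager subset A, the conjugate saturation [A] = {g a g⁻¹ : g ∈ G, a ∈ A} is meager. Then the product group G₁ × G₂ also satisfies condition (C). -/
open Set Topology Filter MeasureTheory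

/-- Condition (C): the conjugate saturation of every analytic meager set is meager. -/
def CondC (G : Type*) [Group G] [TopologicalSpace G] : Prop :=
  ∀ A : Set G, AnalyticSet A → IsMeagre A →
    IsMeagre {x : G | ∃ g : G, ∃ a ∈ A, x = g * a * g⁻¹}

open Set Topology Filter MeasureTheory

section KU
variable {α β : Type*} [TopologicalSpace α] [TopologicalSpace β]

/-- Sections of a dense open set in a product are generically dense. -/
lemma eventually_dense_section [SecondCountableTopology β] {U : Set (α × β)}
    (hU : IsOpen U) (hd : Dense U) :
    ∀ᶠ x in residual α, Dense {y : β | (x, y) ∈ U} := by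
  obtain ⟨b, bct, bne, bb⟩ := TopologicalSpace.exists_countable_basis β
  have key : ∀ V ∈ b, IsOpen (Prod.fst '' (U ∩ univ ×ˢ V)) ∧
      Dense (Prod.fst '' (U ∩ univ ×ˢ V)) := by
    intro V hV
    have hVo : IsOpen V := bb.isOpen hV
    have hVne : V.Nonempty := by
      rcases eq_empty_or_nonempty V with h | h
      · exact absurd (h ▸ hV) bne
      · exact h
    constructor
    · exact isOpenMap_fst _ (hU.inter (isOpen_univ.prod hVo))
    · rw [dense_iff_inter_open]
      intro O hO hOne
      obtain ⟨p, ⟨hpO, hpV⟩, hpU⟩ :=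
        hd.inter_open_nonempty _ (hO.prod hVo) (hOne.prod hVne)
      exact ⟨p.1, hpO, p, ⟨hpU, trivial, hpV⟩, rfl⟩
  have hmem : (⋂ V ∈ b, Prod.fst '' (U ∩ univ ×ˢ V)) ∈ residual α :=
    (countable_bInter_mem bct).2 fun V hV =>
      residual_of_dense_open (key V hV).1 (key V hV).2
  refine mem_of_superset hmem ?_
  intro x hx
  simp only [mem_setOf_eq]
  rw [bb.dense_iff]
  intro V hV hVne
  obtain ⟨p, ⟨hpU, -, hpV⟩, hp1⟩ := mem_iInter₂.1 hx V hV
  refine ⟨p.2, hpV, ?_⟩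
  have : (x, p.2) = p := by rw [← hp1]
  simp only [mem_setOf_eq, this]
  exact hpU

/-- Easy direction of Kuratowski–Ulam: sections of a meager set are generically meager. -/
lemma ku_easy [SecondCountableTopology β] {S : Set (α × β)} (hS : IsMeagre S) :
    ∀ᶠ x in residual α, IsMeagre {y : β | (x, y) ∈ S} := by
  rw [IsMeagre, mem_residual_iff] at hS
  obtain ⟨𝒰, h𝒰o, h𝒰d, h𝒰ct, h𝒰sub⟩ := hS
  have ev : ∀ᶠ x in residual α, ∀ U ∈ 𝒰, Dense {y : β | (x, y) ∈ U} :=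
    (eventually_countable_ball h𝒰ct).2 fun U hU =>
      eventually_dense_section (h𝒰o U hU) (h𝒰d U hU)
  refine ev.mono fun x hx => ?_
  rw [IsMeagre]
  have : (⋂ U ∈ 𝒰, {y : β | (x, y) ∈ U}) ∈ residual β :=
    (countable_bInter_mem h𝒰ct).2 fun U hU =>
      residual_of_dense_open ((h𝒰o U hU).preimage (Continuous.prodMk_right x)) (hx U hU)
  refine mem_of_superset this ?_
  intro y hy
  exact h𝒰sub (mem_sInter.2 fun U hU => mem_iInter₂.1 hy U hU)

lemma open_isMeagre_empty [BaireSpace β] {U : Set β} (hU : IsOpen U) (hm : IsMeagre U) :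
    U = ∅ := by
  rw [eq_empty_iff_forall_notMem]
  intro y hy
  obtain ⟨z, hz1, hz2⟩ := (dense_of_mem_residual hm).inter_open_nonempty U hU ⟨y, hy⟩
  exact hz2 hz1

/-- Hard direction of Kuratowski–Ulam for Baire measurable sets. -/
lemma ku_hard [BaireSpace α] [BaireSpace β] [SecondCountableTopology β] {S : Set (α × β)}
    (hS : BaireMeasurableSet S) (h : ∀ᶠ x in residual α, IsMeagre {y : β | (x, y) ∈ S}) :
    IsMeagre S := by
  obtain ⟨U, hUo, hSU⟩ := hS.residualEq_isOpen
  have hΔ : IsMeagre {p : α × β | ¬(p ∈ S ↔ p ∈ U)} := by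
    rw [IsMeagre]
    refine mem_of_superset hSU ?_
    intro p hp
    simp only [mem_compl_iff, mem_setOf_eq, not_not]
    exact iff_of_eq hp
  have hsec := (ku_easy hΔ).and h
  have hUsec : ∀ᶠ x in residual α, ∀ y : β, (x, y) ∉ U := by
    refine hsec.mono fun x ⟨hx1, hx2⟩ => ?_
    have hUm : IsMeagre {y : β | (x, y) ∈ U} := by
      have hsub : {y : β | (x, y) ∈ U} ⊆
          {y : β | (x, y) ∈ S} ∪ {y : β | ¬((x, y) ∈ S ↔ (x, y) ∈ U)} := by
        intro y hy
        by_cases hS' : (x, y) ∈ S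
        · exact Or.inl hS'
        · exact Or.inr (by simp only [mem_setOf_eq]; intro hiff; exact hS' (hiff.2 hy))
      refine IsMeagre.mono hsub ?_
      rw [IsMeagre, compl_union]
      exact inter_mem hx2 hx1
    have he := open_isMeagre_empty (hUo.preimage (Continuous.prodMk_right x)) hUm
    intro y hy
    have : y ∈ ((fun y => (x, y)) ⁻¹' U) := hy
    rw [he] at this
    exact this
  have hU : U = ∅ := by
    rw [eq_empty_iff_forall_notMem]
    rintro ⟨x, y⟩ hxy
    obtain ⟨O, V, hO, hV, hxO, hyV, hOV⟩ := isOpen_prod_iff.1 hUo x y hxy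
    obtain ⟨x', hx'O, hx'R⟩ :=
      (dense_of_mem_residual hUsec).inter_open_nonempty O hO ⟨x, hxO⟩
    exact hx'R y (hOV ⟨hx'O, hyV⟩)
  rw [IsMeagre]
  refine mem_of_superset hSU ?_
  intro p hp
  rw [hU] at hp
  simp only [mem_compl_iff]
  intro hpS
  exact (iff_of_eq hp).1 hpS

end KU


/-- Every set has a Baire hull: a Baire measurable superset inside its closure such that
every Baire measurable subset of the difference is meager. -/
lemma exists_baireHull {X : Type*} [TopologicalSpace X] [SecondCountableTopology X] (S : Set X) :
    ∃ T : Set X, S ⊆ T ∧ T ⊆ closure S ∧ BaireMeasurableSet T ∧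
      ∀ B : Set X, B ⊆ T \ S → BaireMeasurableSet B → IsMeagre B := by

  obtain ⟨b, bct, -, bb⟩ := TopologicalSpace.exists_countable_basis X
  set W : Set X := ⋃₀ {V | V ∈ b ∧ IsMeagre (V ∩ S)} with hWdef
  have hWo : IsOpen W := isOpen_sUnion fun V hV => bb.isOpen hV.1
  have hWS : IsMeagre (W ∩ S) := by
    rw [IsMeagre]
    have hsub : {V | V ∈ b ∧ IsMeagre (V ∩ S)}.Countable :=
      bct.mono (sep_subset _ _)
    have hmem : (⋂ V ∈ {V | V ∈ b ∧ IsMeagre (V ∩ S)}, (V ∩ S)ᶜ) ∈ residual X :=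
      (countable_bInter_mem hsub).2 fun V hV => hV.2
    refine mem_of_superset hmem ?_
    intro x hx hxWS
    obtain ⟨hxW, hxS⟩ := hxWS
    obtain ⟨V, hV, hxV⟩ := hxW
    exact (mem_iInter₂.1 hx V hV) ⟨hxV, hxS⟩
  refine ⟨(closure S \ W) ∪ (W ∩ S), ?_, ?_, ?_, ?_⟩
  · intro x hx
    by_cases hxW : x ∈ W
    · exact Or.inr ⟨hxW, hx⟩
    · exact Or.inl ⟨subset_closure hx, hxW⟩
  · intro x hx
    rcases hx with hx | hx
    · exact hx.1
    · exact subset_closure hx.2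
  · exact ((isClosed_closure.isOpen_compl.baireMeasurableSet.of_compl.diff
      hWo.baireMeasurableSet).union hWS.baireMeasurableSet)
  · intro B hB hBP
    by_contra hBnm
    obtain ⟨U, hUo, hBU⟩ := hBP.residualEq_isOpen
    have hΔ : IsMeagre {p : X | ¬(p ∈ B ↔ p ∈ U)} := by
      rw [IsMeagre]
      refine mem_of_superset hBU ?_
      intro p hp
      simp only [mem_compl_iff, mem_setOf_eq, not_not]
      exact iff_of_eq hp
    have hUnm : ¬ IsMeagre U := by
      intro hU
      refine hBnm (IsMeagre.mono (?_ : B ⊆ U ∪ {p : X | ¬(p ∈ B ↔ p ∈ U)}) ?_)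
      swap
      · rw [IsMeagre, compl_union]; exact inter_mem hU hΔ
      · intro p hp
        by_cases hpU : p ∈ U
        · exact Or.inl hpU
        · exact Or.inr fun hiff => hpU (hiff.1 hp)
    have hUS : IsMeagre (U ∩ S) := by
      refine IsMeagre.mono ?_ hΔ
      rintro p ⟨hpU, hpS⟩ hiff
      exact (hB (hiff.2 hpU)).2 hpS
    have hUW : U ⊆ W := by
      intro p hp
      obtain ⟨V, hVb, hpV, hVU⟩ := bb.exists_subset_of_mem_open hp hUo
      exact ⟨V, ⟨hVb, hUS.mono (t := V ∩ S) fun q (hq : q ∈ V ∩ S) => (⟨hVU hq.1, hq.2⟩ : q ∈ U ∩ S)⟩, hpV⟩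
    refine hUnm (IsMeagre.mono (?_ : U ⊆ (U \ B) ∪ (W ∩ S)) ?_)
    swap
    · rw [IsMeagre, compl_union]
      refine inter_mem ?_ hWS
      have : U \ B ⊆ {p : X | ¬(p ∈ B ↔ p ∈ U)} := by
        rintro p ⟨hpU, hpB⟩ hiff
        exact hpB (hiff.2 hpU)
      exact mem_of_superset hΔ (compl_subset_compl.2 this)
    · intro p hp
      by_cases hpB : p ∈ B
      · rcases hB hpB with ⟨hT, -⟩
        rcases hT with hT | hT
        · exact absurd (hUW hp) hT.2
        · exact Or.inr hT
      · exact Or.inl ⟨hp, hpB⟩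

namespace CondCAux

/-- The cylinder determined by a finite list. -/
def cyl (s : List ℕ) : Set (ℕ → ℕ) := {σ | ∀ i < s.length, σ i = s.getD i 0}

lemma cyl_nil : cyl [] = univ := by
  ext σ; simp [cyl]

lemma cyl_anti {s t : List ℕ} (h : t <+: s) : cyl s ⊆ cyl t := by
  obtain ⟨r, rfl⟩ := h
  intro σ hσ i hi
  rw [hσ i (by simp; omega), List.getD_append _ _ _ _ hi]

lemma mem_cyl_append {s : List ℕ} {σ : ℕ → ℕ} (h : σ ∈ cyl s) :
    σ ∈ cyl (s ++ [σ s.length]) := by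
  intro i hi
  simp only [List.length_append, List.length_cons, List.length_nil] at hi
  rcases lt_or_eq_of_le (Nat.lt_succ_iff.1 hi) with hi' | hi'
  · rw [h i hi', List.getD_append _ _ _ _ hi']
  · subst hi'
    rw [List.getD_append_right _ _ _ _ (le_refl _)]
    simp

lemma cyl_eq_iUnion (s : List ℕ) : cyl s = ⋃ n, cyl (s ++ [n]) := by
  apply subset_antisymm
  · intro σ hσ
    exact mem_iUnion.2 ⟨σ s.length, mem_cyl_append hσ⟩
  · exact iUnion_subset fun n => cyl_anti ⟨[n], rfl⟩

end CondCAux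

open CondCAux in
theorem analyticSet_baireMeasurableSet {X : Type*} [MetricSpace X] [SecondCountableTopology X]
    {A : Set X} (hA : AnalyticSet A) : BaireMeasurableSet A := by
  rw [AnalyticSet] at hA
  rcases hA with rfl | ⟨f, hf, rfl⟩
  · exact IsMeagre.empty.baireMeasurableSet
  classical
  set As : List ℕ → Set X := fun s => f '' cyl s with hAs
  choose T hT₁ hT₂ hT₃ hT₄ using fun s => exists_baireHull (As s)
  set T' : List ℕ → Set X := fun s => ⋂ k ∈ Finset.range (s.length + 1), T (s.take k) with hT'
  have hT'sub : ∀ s, T' s ⊆ T s := by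
    intro s x hx
    have := mem_iInter₂.1 hx s.length (Finset.mem_range.2 (Nat.lt_succ_self _))
    rwa [List.take_length] at this
  have hAsT' : ∀ s, As s ⊆ T' s := by
    intro s x hx
    refine mem_iInter₂.2 fun k hk => ?_
    exact hT₁ _ (image_mono (f := f) (cyl_anti (List.take_prefix k s)) hx)
  have hT'append : ∀ s n, T' (s ++ [n]) ⊆ T' s := by
    intro s n x hx
    refine mem_iInter₂.2 fun k hk => ?_
    rw [Finset.mem_range] at hk
    have h1 : s.take k = (s ++ [n]).take k :=
      (List.take_append_of_le_length (by omega)).symm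
    rw [h1]
    exact mem_iInter₂.1 hx k (by simp [List.length_append]; omega)
  -- the meager error set
  set M : Set X := ⋃ s : List ℕ, (T' s \ ⋃ n, T' (s ++ [n])) with hM
  have hT'BP : ∀ s, BaireMeasurableSet (T' s) := fun s =>
    BaireMeasurableSet.biInter (Finset.range (s.length + 1)).countable_toSet
      fun k _ => hT₃ _
  have hMpiece : ∀ s : List ℕ, IsMeagre (T' s \ ⋃ n, T' (s ++ [n])) := by
    intro s
    refine hT₄ s _ ?_ ((hT'BP s).diff (BaireMeasurableSet.iUnion fun n => hT'BP _))
    rintro x ⟨hx1, hx2⟩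
    refine ⟨hT'sub s hx1, fun hxA => hx2 ?_⟩
    rw [hAs] at hxA
    obtain ⟨σ, hσ, rfl⟩ := hxA
    have := mem_cyl_append hσ
    exact mem_iUnion.2 ⟨σ s.length, hAsT' _ ⟨σ, this, rfl⟩⟩
  have hMmeager : IsMeagre M := by
    rw [IsMeagre, hM, compl_iUnion]
    exact (countable_iInter_mem).2 fun s => hMpiece s
  -- main claim
  have claim : T' [] \ M ⊆ range f := by
    rintro x ⟨hx0, hxM⟩
    have key : ∀ s, x ∈ T' s → ∃ n, x ∈ T' (s ++ [n]) := by
      intro s hs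
      have : x ∉ T' s \ ⋃ n, T' (s ++ [n]) := fun h => hxM (mem_iUnion.2 ⟨s, h⟩)
      rcases not_and_or.1 this with h | h
      · exact absurd hs h
      · rw [not_not] at h
        exact mem_iUnion.1 h
    set F : List ℕ → ℕ := fun s => if h : x ∈ T' s then (key s h).choose else 0 with hF
    have hFspec : ∀ s, x ∈ T' s → x ∈ T' (s ++ [F s]) := by
      intro s h
      rw [hF]
      simp only [dif_pos h]
      exact (key s h).choose_spec
    set u : ℕ → List ℕ := fun k => Nat.rec [] (fun _ s => s ++ [F s]) k with hu
    have hu0 : u 0 = [] := rfl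
    have husucc : ∀ k, u (k + 1) = u k ++ [F (u k)] := fun k => rfl
    have hux : ∀ k, x ∈ T' (u k) := by
      intro k
      induction k with
      | zero => exact hx0
      | succ k ih => rw [husucc]; exact hFspec _ ih
    have hulen : ∀ k, (u k).length = k := by
      intro k
      induction k with
      | zero => rfl
      | succ k ih => rw [husucc]; simp [ih]
    set σ : ℕ → ℕ := fun i => F (u i) with hσdef
    have hugetD : ∀ k, ∀ i < k, (u k).getD i 0 = σ i := by
      intro k
      induction k with
      | zero => intro i hi; omega
      | succ k ih =>
        intro i hi
        rw [husucc]
        rcases lt_or_eq_of_le (Nat.lt_succ_iff.1 hi) with hi' | hi'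
        · rw [List.getD_append _ _ _ _ (by rw [hulen]; exact hi')]
          exact ih i hi'
        · subst hi'
          rw [List.getD_append_right _ _ _ _ (by rw [hulen])]
          simp [hulen, hσdef]
    have hcylu : ∀ k, cyl (u k) = PiNat.cylinder σ k := by
      intro k
      ext τ
      simp only [cyl, PiNat.cylinder, mem_setOf_eq, hulen]
      exact forall₂_congr fun i hi => by rw [hugetD k i hi]
    have hclos : ∀ k, x ∈ closure (f '' PiNat.cylinder σ k) := by
      intro k
      have h1 : x ∈ closure (f '' cyl (u k)) := hT₂ (u k) (hT'sub _ (hux k))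
      rwa [hcylu k] at h1
    -- conclude x = f σ
    have hdist : ∀ ε : ℝ, 0 < ε → dist x (f σ) ≤ ε := by
      intro ε hε
      have hnb : f ⁻¹' Metric.ball (f σ) ε ∈ nhds σ :=
        hf.continuousAt (Metric.ball_mem_nhds _ hε)
      obtain ⟨O, hOsub, hOo, hσO⟩ := mem_nhds_iff.1 hnb
      obtain ⟨V, ⟨y, n, rfl⟩, hσV, hVO⟩ :=
        (PiNat.isTopologicalBasis_cylinders (fun _ : ℕ => ℕ)).exists_subset_of_mem_open hσO hOo
      have hcyleq : PiNat.cylinder σ n = PiNat.cylinder y n :=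
        PiNat.mem_cylinder_iff_eq.1 hσV
      have hsub2 : f '' PiNat.cylinder σ n ⊆ Metric.ball (f σ) ε := by
        rw [hcyleq]
        rintro z ⟨τ, hτ, rfl⟩
        exact hOsub (hVO hτ)
      have := closure_mono hsub2 (hclos n)
      have := Metric.closure_ball_subset_closedBall this
      simpa [Metric.mem_closedBall] using this
    have : dist x (f σ) ≤ 0 := by
      by_contra h
      push_neg at h
      have := hdist (dist x (f σ) / 2) (by linarith)
      linarith
    have : x = f σ := by
      rw [← dist_le_zero]; exact this
    exact ⟨σ, this.symm⟩
  -- wrap up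
  have hsub1 : range f ⊆ T' [] := by
    have : As [] = range f := by rw [hAs]; simp [cyl_nil]
    rw [← this]; exact hAsT' []
  have hdiff : IsMeagre (T' [] \ range f) := by
    refine hMmeager.mono ?_
    rintro x ⟨hx1, hx2⟩
    by_contra hxM
    exact hx2 (claim ⟨hx1, hxM⟩)
  have heq : range f = T' [] \ (T' [] \ range f) := by
    ext x
    constructor
    · intro hx
      exact ⟨hsub1 hx, fun h => h.2 hx⟩
    · rintro ⟨hx1, hx2⟩
      by_contra h
      exact hx2 ⟨hx1, h⟩
  rw [heq]
  exact (hT'BP []).diff hdiff.baireMeasurableSet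


lemma polish_baireSpace (X : Type*) [TopologicalSpace X] [PolishSpace X] : BaireSpace X := by
  letI := TopologicalSpace.upgradeIsCompletelyMetrizable X
  infer_instance

lemma analyticSet_section {X Y : Type*} [TopologicalSpace X] [T1Space X] [TopologicalSpace Y]
    {A : Set (X × Y)} (hA : AnalyticSet A) (x : X) : AnalyticSet {y : Y | (x, y) ∈ A} := by
  rw [AnalyticSet] at hA
  rcases hA with rfl | ⟨f, hf, rfl⟩
  · simpa using analyticSet_empty
  have hC : IsClosed {σ : ℕ → ℕ | (f σ).1 = x} :=
    isClosed_singleton.preimage (continuous_fst.comp hf)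
  borelize (ℕ → ℕ)
  have hCa : AnalyticSet {σ : ℕ → ℕ | (f σ).1 = x} := hC.measurableSet.analyticSet
  have himg := hCa.image_of_continuous (continuous_snd.comp hf)
  have heq : (Prod.snd ∘ f) '' {σ : ℕ → ℕ | (f σ).1 = x} = {y : Y | (x, y) ∈ range f} := by
    ext y
    constructor
    · rintro ⟨σ, hσ, rfl⟩
      exact ⟨σ, Prod.ext hσ rfl⟩
    · rintro ⟨σ, hσ⟩
      exact ⟨σ, congrArg Prod.fst hσ, congrArg Prod.snd hσ⟩
  rwa [heq] at himg

theorem condC_prod {G₁ G₂ : Type*} [Group G₁] [MetricSpace G₁] [IsTopologicalGroup G₁]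
    [PolishSpace G₁] [Group G₂] [MetricSpace G₂] [IsTopologicalGroup G₂]
    [PolishSpace G₂] (h₁ : CondC G₁) (h₂ : CondC G₂) : CondC (G₁ × G₂) := by
  intro A hA hAm
  haveI : BaireSpace G₁ := polish_baireSpace G₁
  haveI : BaireSpace G₂ := polish_baireSpace G₂
  have hA' := hA
  rw [AnalyticSet] at hA'
  rcases hA' with rfl | ⟨f, hf, hrange⟩
  · have he : {x : G₁ × G₂ | ∃ g : G₁ × G₂, ∃ a ∈ (∅ : Set (G₁ × G₂)), x = g * a * g⁻¹} = ∅ := by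
      simp
    rw [he]; exact IsMeagre.empty
  set e : G₂ × G₁ ≃ₜ G₁ × G₂ := Homeomorph.prodComm G₂ G₁ with hedef
  -- second-coordinate saturation
  set φ : G₂ × (ℕ → ℕ) → G₁ × G₂ := fun q => ((f q.2).1, q.1 * (f q.2).2 * q.1⁻¹) with hφ
  have hφc : Continuous φ := by
    refine Continuous.prodMk (continuous_fst.comp (hf.comp continuous_snd)) ?_
    exact (continuous_fst.mul (continuous_snd.comp (hf.comp continuous_snd))).mul
      continuous_fst.inv
  set S : Set (G₁ × G₂) := range φ with hSdef
  have hSanal : AnalyticSet S := analyticSet_range_of_polishSpace hφc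
  have hsecS : ∀ x : G₁, {y : G₂ | (x, y) ∈ S} =
      {y : G₂ | ∃ g : G₂, ∃ a ∈ {y' : G₂ | (x, y') ∈ A}, y = g * a * g⁻¹} := by
    intro x
    ext y
    simp only [mem_setOf_eq, hSdef, mem_range]
    constructor
    · rintro ⟨⟨g, σ⟩, hq⟩
      have h1 : (f σ).1 = x := congrArg Prod.fst hq
      have h2 : g * (f σ).2 * g⁻¹ = y := congrArg Prod.snd hq
      refine ⟨g, (f σ).2, ?_, h2.symm⟩
      show (x, (f σ).2) ∈ A
      rw [← hrange]
      exact ⟨σ, Prod.ext h1 rfl⟩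
    · rintro ⟨g, a, ha, rfl⟩
      have ha' : (x, a) ∈ range f := by rw [hrange]; exact ha
      obtain ⟨σ, hσ⟩ := ha'
      refine ⟨(g, σ), ?_⟩
      show ((f σ).1, g * (f σ).2 * g⁻¹) = (x, g * a * g⁻¹)
      rw [show (f σ).2 = a from congrArg Prod.snd hσ,
        show (f σ).1 = x from congrArg Prod.fst hσ]
  have hsecmeager : ∀ᶠ x in residual G₁, IsMeagre {y : G₂ | (x, y) ∈ S} := by
    refine (ku_easy hAm).mono fun x hx => ?_
    rw [hsecS x]
    exact h₂ _ (analyticSet_section hA x) hx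
  have hSm : IsMeagre S := ku_hard (analyticSet_baireMeasurableSet hSanal) hsecmeager
  -- full saturation
  set ψ : (G₁ × G₂) × (ℕ → ℕ) → G₁ × G₂ := fun q => q.1 * f q.2 * q.1⁻¹ with hψ
  have hψc : Continuous ψ :=
    (continuous_fst.mul (hf.comp continuous_snd)).mul continuous_fst.inv
  set T : Set (G₁ × G₂) := range ψ with hTdef
  have hgoal : {x : G₁ × G₂ | ∃ g : G₁ × G₂, ∃ a ∈ A, x = g * a * g⁻¹} = T := by
    ext x
    simp only [mem_setOf_eq, hTdef, mem_range]
    constructor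
    · rintro ⟨g, a, ha, rfl⟩
      have ha' : a ∈ range f := by rw [hrange]; exact ha
      obtain ⟨σ, rfl⟩ := ha'
      exact ⟨(g, σ), rfl⟩
    · rintro ⟨⟨g, σ⟩, rfl⟩
      exact ⟨g, f σ, by rw [← hrange]; exact ⟨σ, rfl⟩, rfl⟩
  rw [hgoal]
  -- swapped versions
  have hS' : e ⁻¹' S = range (Prod.swap ∘ φ) := by
    ext p
    simp only [mem_preimage, hedef, Homeomorph.coe_prodComm, hSdef, mem_range,
      Function.comp_apply]
    constructor
    · rintro ⟨q, hq⟩; exact ⟨q, by rw [hq, Prod.swap_swap]⟩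
    · rintro ⟨q, rfl⟩; exact ⟨q, (Prod.swap_swap _).symm⟩
  have hT' : e ⁻¹' T = range (Prod.swap ∘ ψ) := by
    ext p
    simp only [mem_preimage, hedef, Homeomorph.coe_prodComm, hTdef, mem_range,
      Function.comp_apply]
    constructor
    · rintro ⟨q, hq⟩; exact ⟨q, by rw [hq, Prod.swap_swap]⟩
    · rintro ⟨q, rfl⟩; exact ⟨q, (Prod.swap_swap _).symm⟩
  have hS'anal : AnalyticSet (e ⁻¹' S) := by
    rw [hS']; exact analyticSet_range_of_polishSpace (continuous_swap.comp hφc)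
  have hT'anal : AnalyticSet (e ⁻¹' T) := by
    rw [hT']; exact analyticSet_range_of_polishSpace (continuous_swap.comp hψc)
  have hS'm : IsMeagre (e ⁻¹' S) :=
    hSm.preimage_of_isOpenMap e.continuous e.isOpenMap
  have hsecT : ∀ b : G₂, {y : G₁ | (b, y) ∈ e ⁻¹' T} =
      {y : G₁ | ∃ g : G₁, ∃ a ∈ {y' : G₁ | (b, y') ∈ e ⁻¹' S}, y = g * a * g⁻¹} := by
    intro b
    ext y₁
    simp only [mem_setOf_eq, mem_preimage, hedef, Homeomorph.coe_prodComm, Prod.swap_prod_mk,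
      hSdef, hTdef, mem_range]
    constructor
    · rintro ⟨⟨g, σ⟩, hq⟩
      have h1 : g.1 * (f σ).1 * g.1⁻¹ = y₁ := congrArg Prod.fst hq
      have h2 : g.2 * (f σ).2 * g.2⁻¹ = b := congrArg Prod.snd hq
      refine ⟨g.1, (f σ).1, ⟨(g.2, σ), ?_⟩, h1.symm⟩
      show φ (g.2, σ) = ((f σ).1, b)
      rw [hφ]
      exact Prod.ext rfl h2
    · rintro ⟨g₁, a, ⟨⟨g₂, σ⟩, hq⟩, rfl⟩
      have h1 : (f σ).1 = a := congrArg Prod.fst hq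
      have h2 : g₂ * (f σ).2 * g₂⁻¹ = b := congrArg Prod.snd hq
      refine ⟨((g₁, g₂), σ), ?_⟩
      show (g₁, g₂) * f σ * (g₁, g₂)⁻¹ = (g₁ * a * g₁⁻¹, b)
      refine Prod.ext ?_ ?_
      · show g₁ * (f σ).1 * g₁⁻¹ = g₁ * a * g₁⁻¹
        rw [h1]
      · show g₂ * (f σ).2 * g₂⁻¹ = b
        exact h2
  have hsecmeagerT : ∀ᶠ b in residual G₂, IsMeagre {y : G₁ | (b, y) ∈ e ⁻¹' T} := by
    refine (ku_easy hS'm).mono fun b hb => ?_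
    rw [hsecT b]
    exact h₁ _ (analyticSet_section hS'anal b) hb
  have hT'm : IsMeagre (e ⁻¹' T) :=
    ku_hard (analyticSet_baireMeasurableSet hT'anal) hsecmeagerT
  have hback : T = e.symm ⁻¹' (e ⁻¹' T) := by
    ext x; simp
  rw [hback]
  exact hT'm.preimage_of_isOpenMap e.symm.continuous e.symm.isOpenMap
end
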